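/- arXiv:1403.7480 — 5 statements merged into one kernel-verified Lean document; each statement's English description precedes it below -/
import Mathlib

section
/- Let α be an expanding algebraic number (an algebraic number all of whose conjugates, including α itself, have modulus greater than 1), let R be a complete residue system mod α in ℤ[α], and let J be the associated backward division map. Then there is a constant c = c(α, R) > 0 such that for each β ∈ ℤ[α] there exists n₀ ∈ ℕ with |σ(J^{(n)}(β))| ≤ c for all n ≥ n₀ and all field embeddings σ : ℚ(α) → ℂ. -/
open Polynomial

/-- `ℤ[α]`: the set of values `P(α)` for `P ∈ ℤ[x]`. -/
def Zadj (α : ℂ) : Set ℂ := {z | ∃ P : ℤ[X], aeval α P = z}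

/-- `F[α]`: the set of all sums `Σ_{j=0}^{n} f_j α^j` with `n ∈ ℕ` and `f_0, …, f_n ∈ F`. -/
def repSet (α : ℂ) (F : Set ℂ) : Set ℂ :=
  {z | ∃ (n : ℕ) (f : ℕ → ℂ), (∀ j ≤ n, f j ∈ F) ∧
    z = ∑ j ∈ Finset.range (n + 1), f j * α ^ j}

/-- `R` is a complete residue system mod `α` in `ℤ[α]`: `R ⊆ ℤ[α]` and every `β ∈ ℤ[α]`
is congruent modulo the ideal `αℤ[α]` to exactly one element of `R`. -/
def IsCRS (α : ℂ) (R : Set ℂ) : Prop :=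
  R ⊆ Zadj α ∧ ∀ β ∈ Zadj α, ∃! r, r ∈ R ∧ ∃ γ ∈ Zadj α, β - r = α * γ

/-- `J` is the backward division map associated to the CRS `R`:
for every `β ∈ ℤ[α]`, `J β ∈ ℤ[α]` and `β = r + α · J β` for some `r ∈ R`. -/
def IsJmap (α : ℂ) (R : Set ℂ) (J : ℂ → ℂ) : Prop :=
  ∀ β ∈ Zadj α, J β ∈ Zadj α ∧ ∃ r ∈ R, β = r + α * J β

/-- `℘`: the set of periodic elements of `ℤ[α]` under `J`. -/
def perSet (α : ℂ) (J : ℂ → ℂ) : Set ℂ :=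
  {β ∈ Zadj α | ∃ n : ℕ, 1 ≤ n ∧ J^[n] β = β}

/-- The orbit of `β` under `J` is eventually periodic. -/
def EvPeriodic (J : ℂ → ℂ) (β : ℂ) : Prop :=
  ∃ (k m : ℕ), 1 ≤ m ∧ J^[k + m] β = J^[k] β



lemma zadj_zero (α : ℂ) : (0:ℂ) ∈ Zadj α := ⟨0, by simp⟩
lemma zadj_intCast (α : ℂ) (n : ℤ) : (n:ℂ) ∈ Zadj α := ⟨C n, by simp⟩
lemma zadj_add {α x y : ℂ} (hx : x ∈ Zadj α) (hy : y ∈ Zadj α) : x + y ∈ Zadj α := by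
  obtain ⟨P, hP⟩ := hx; obtain ⟨Q, hQ⟩ := hy; exact ⟨P + Q, by simp [hP, hQ]⟩
lemma zadj_mul {α x y : ℂ} (hx : x ∈ Zadj α) (hy : y ∈ Zadj α) : x * y ∈ Zadj α := by
  obtain ⟨P, hP⟩ := hx; obtain ⟨Q, hQ⟩ := hy; exact ⟨P * Q, by simp [hP, hQ]⟩
lemma zadj_neg {α x : ℂ} (hx : x ∈ Zadj α) : -x ∈ Zadj α := by
  obtain ⟨P, hP⟩ := hx; exact ⟨-P, by simp [hP]⟩
lemma zadj_sub {α x y : ℂ} (hx : x ∈ Zadj α) (hy : y ∈ Zadj α) : x - y ∈ Zadj α := by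
  rw [sub_eq_add_neg]; exact zadj_add hx (zadj_neg hy)

lemma aeval_mem_adjoin (α : ℂ) (P : ℤ[X]) :
    aeval α P ∈ IntermediateField.adjoin ℚ {α} := by
  induction P using Polynomial.induction_on with
  | C n => simpa using IntermediateField.intCast_mem _ n
  | add p q hp hq => rw [map_add]; exact add_mem hp hq
  | monomial n c hc =>
      rw [pow_succ, ← mul_assoc, map_mul, aeval_X]
      exact mul_mem hc (IntermediateField.mem_adjoin_simple_self ℚ α)

lemma zadj_mem_adjoin {α x : ℂ} (hx : x ∈ Zadj α) :
    x ∈ IntermediateField.adjoin ℚ {α} := by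
  obtain ⟨P, hP⟩ := hx; exact hP ▸ aeval_mem_adjoin α P

/-- every element of ℤ[α] is congruent to an integer mod α -/
lemma zadj_congr_int (α : ℂ) {x : ℂ} (hx : x ∈ Zadj α) :
    ∃ n : ℤ, ∃ γ ∈ Zadj α, x - n = α * γ := by
  obtain ⟨P, hP⟩ := hx
  refine ⟨P.coeff 0, aeval α P.divX, ⟨P.divX, rfl⟩, ?_⟩
  have h := P.X_mul_divX_add
  have h2 := congrArg (aeval α) h
  rw [map_add, map_mul, aeval_X, aeval_C] at h2
  rw [← hP, ← h2]
  simp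

lemma strip (α : ℂ) (h0 : α ≠ 0) :
    ∀ n : ℕ, ∀ q : ℤ[X], q.natDegree = n → q ≠ 0 → aeval α q = 0 →
      ∃ q' : ℤ[X], aeval α q' = 0 ∧ q'.coeff 0 ≠ 0 := by
  intro n
  induction n using Nat.strong_induction_on with
  | _ n ih =>
  intro q hn hq0 hev
  by_cases hc : q.coeff 0 ≠ 0
  · exact ⟨q, hev, hc⟩
  push_neg at hc
  have hq : X * q.divX = q := by
    have := q.X_mul_divX_add; rwa [hc, map_zero, add_zero] at this
  have hd0 : q.divX ≠ 0 := fun h => hq0 (by rw [← hq, h, mul_zero])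
  have hdiv : aeval α q.divX = 0 := by
    have h2 : α * aeval α q.divX = 0 := by
      have := congrArg (aeval α) hq
      rwa [map_mul, aeval_X, hev] at this
    rcases mul_eq_zero.mp h2 with h | h
    · exact absurd h h0
    · exact h
  have hdeg : 0 < q.natDegree := by
    rcases Nat.eq_zero_or_pos q.natDegree with h | h
    · exact absurd (by rw [q.eq_C_of_natDegree_eq_zero h, hc, map_zero]) hq0
    · exact h
  exact ih q.divX.natDegree (by rw [q.natDegree_divX_eq_natDegree_tsub_one]; omega)
    q.divX rfl hd0 hdiv

lemma crs_eq_of_congr {α : ℂ} {R : Set ℂ} (hR : IsCRS α R) {r r' : ℂ}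
    (hr : r ∈ R) (hr' : r' ∈ R) {γ : ℂ} (hγ : γ ∈ Zadj α) (h : r - r' = α * γ) : r = r' := by
  obtain ⟨x, hx, hu⟩ := hR.2 r (hR.1 hr)
  have h1 : r = x := hu r ⟨hr, 0, zadj_zero α, by simp⟩
  have h2 : r' = x := hu r' ⟨hr', γ, hγ, h⟩
  rw [h1, h2]

lemma crs_finite {α : ℂ} (hα : IsAlgebraic ℚ α) (h0 : α ≠ 0) {R : Set ℂ}
    (hR : IsCRS α R) : R.Finite := by
  obtain ⟨q0, hq0ne, hq0ev⟩ := (IsFractionRing.isAlgebraic_iff ℤ ℚ ℂ).mpr hα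
  obtain ⟨q, hqev, hqc⟩ := strip α h0 q0.natDegree q0 rfl hq0ne hq0ev
  set a : ℤ := q.coeff 0 with ha_def
  obtain ⟨γ₀, hγ₀, hγ₀eq⟩ : ∃ γ ∈ Zadj α, (a:ℂ) = α * γ := by
    have h2 := congrArg (aeval α) q.X_mul_divX_add
    rw [map_add, map_mul, aeval_X, aeval_C, hqev] at h2
    refine ⟨-aeval α q.divX, zadj_neg ⟨q.divX, rfl⟩, ?_⟩
    have h3 : α * aeval α q.divX + (a:ℂ) = 0 := by simpa using h2
    linear_combination h3
  haveI : NeZero a.natAbs := ⟨Int.natAbs_ne_zero.mpr hqc⟩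
  rw [← Set.finite_coe_iff]
  refine Finite.of_injective (fun r : R =>
    (((zadj_congr_int α (hR.1 r.2)).choose : ℤ) : ZMod a.natAbs)) ?_
  intro r r' hrr'
  obtain ⟨γ, hγ, heq⟩ := (zadj_congr_int α (hR.1 r.2)).choose_spec
  obtain ⟨γ', hγ', heq'⟩ := (zadj_congr_int α (hR.1 r'.2)).choose_spec
  set n : ℤ := (zadj_congr_int α (hR.1 r.2)).choose
  set n' : ℤ := (zadj_congr_int α (hR.1 r'.2)).choose
  have hdvd : a ∣ n - n' := by
    have := (ZMod.intCast_eq_intCast_iff _ _ _).mp hrr'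
    have h2 : (a.natAbs : ℤ) ∣ n - n' := Int.ModEq.dvd this.symm
    exact Int.natAbs_dvd.mp h2
  obtain ⟨k, hk⟩ := hdvd
  have key : (r : ℂ) - r' = α * (γ - γ' + k * γ₀) := by
    have hcast : (n:ℂ) - n' = (a:ℂ) * k := by
      exact_mod_cast congrArg (fun z : ℤ => (z:ℂ)) hk
    have hnn' : ((n : ℂ) - n') = α * (k * γ₀) := by rw [hcast, hγ₀eq]; ring
    calc (r : ℂ) - r' = ((r:ℂ) - n) - ((r':ℂ) - n') + ((n:ℂ) - n') := by ring
      _ = α * γ - α * γ' + α * (k * γ₀) := by rw [heq, heq', hnn']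
      _ = α * (γ - γ' + k * γ₀) := by ring
  have := crs_eq_of_congr hR r.2 r'.2
    (zadj_add (zadj_sub hγ hγ') (zadj_mul (zadj_intCast α k) hγ₀)) key
  exact Subtype.ext this

open Classical in
noncomputable def embLift (α : ℂ) (x : ℂ) : IntermediateField.adjoin ℚ {α} :=
  if h : x ∈ IntermediateField.adjoin ℚ {α} then ⟨x, h⟩ else 0

lemma embLift_coe {α x : ℂ} (h : x ∈ IntermediateField.adjoin ℚ {α}) :
    (embLift α x : ℂ) = x := by simp only [embLift, dif_pos h]

lemma embLift_eq {α x : ℂ} (h : x ∈ IntermediateField.adjoin ℚ {α}) :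
    embLift α x = ⟨x, h⟩ := Subtype.ext (embLift_coe h)

lemma iter_mem {α : ℂ} {R : Set ℂ} {J : ℂ → ℂ} (hJ : IsJmap α R J) {β : ℂ}
    (hβ : β ∈ Zadj α) (n : ℕ) : J^[n] β ∈ Zadj α := by
  induction n with
  | zero => simpa using hβ
  | succ n ih => rw [Function.iterate_succ_apply']; exact (hJ _ ih).1

lemma step_bound {α : ℂ} {R : Set ℂ} {J : ℂ → ℂ} (hR : IsCRS α R) (hJ : IsJmap α R J)
    (σ : (IntermediateField.adjoin ℚ {α}) →ₐ[ℚ] ℂ) {γ : ℂ} (hγ : γ ∈ Zadj α)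
    {C m₀ : ℝ} (hC0 : 0 ≤ C) (hC : ∀ r ∈ R, ‖σ (embLift α r)‖ ≤ C)
    (hm : 0 < m₀)
    (hma : m₀ ≤ ‖σ ⟨α, IntermediateField.mem_adjoin_simple_self ℚ α⟩‖) :
    ‖σ (embLift α (J γ))‖ ≤ (‖σ (embLift α γ)‖ + C) / m₀ := by
  obtain ⟨hJZ, r, hrR, heq⟩ := hJ γ hγ
  have hγK := zadj_mem_adjoin hγ
  have hrK := zadj_mem_adjoin (hR.1 hrR)
  have hJK := zadj_mem_adjoin hJZ
  set aK : IntermediateField.adjoin ℚ {α} :=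
    ⟨α, IntermediateField.mem_adjoin_simple_self ℚ α⟩ with haK
  have hEq : embLift α γ = embLift α r + aK * embLift α (J γ) := by
    apply Subtype.ext
    push_cast
    rw [embLift_coe hγK, embLift_coe hrK, embLift_coe hJK]
    exact heq
  have hσ : σ (embLift α γ) = σ (embLift α r) + σ aK * σ (embLift α (J γ)) := by
    rw [hEq, map_add, map_mul]
  have habs : 0 < ‖σ aK‖ := lt_of_lt_of_le hm hma
  have hne : σ aK ≠ 0 := by
    intro h; rw [h] at habs; norm_num at habs
  have hdiv : σ (embLift α (J γ)) = (σ (embLift α γ) - σ (embLift α r)) / σ aK := by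
    rw [eq_div_iff hne]; linear_combination -hσ
  rw [hdiv, norm_div]
  apply div_le_div₀ (add_nonneg (norm_nonneg _) hC0)
  · calc ‖σ (embLift α γ) - σ (embLift α r)‖
        ≤ ‖σ (embLift α γ)‖ + ‖σ (embLift α r)‖ := by
          exact (norm_sub_le _ _)
      _ ≤ ‖σ (embLift α γ)‖ + C := by
          have := hC r hrR; linarith
  · exact hm
  · exact hma


/-- Proposition 3: if `α` is an expanding algebraic number (all conjugates of modulus `> 1`),
`R` a CRS and `J` the associated map, then there is `c = c(α, R) > 0` such that for each
`β ∈ ℤ[α]` there is `n₀` with `|σ(J^{(n)}(β))| ≤ c` for all `n ≥ n₀` and all embeddings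
`σ : ℚ(α) → ℂ`. -/
theorem orbits_eventually_bounded (α : ℂ) (hα : IsAlgebraic ℚ α)
    (hexp : ∀ z : ℂ, aeval z (minpoly ℚ α) = 0 → 1 < ‖z‖)
    (R : Set ℂ) (hR : IsCRS α R) (J : ℂ → ℂ) (hJ : IsJmap α R J) :
    ∃ c : ℝ, 0 < c ∧ ∀ β ∈ Zadj α, ∃ n₀ : ℕ, ∀ n ≥ n₀,
      ∀ σ : (IntermediateField.adjoin ℚ {α}) →ₐ[ℚ] ℂ,
        ∀ h : J^[n] β ∈ IntermediateField.adjoin ℚ {α},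
          ‖σ ⟨J^[n] β, h⟩‖ ≤ c := by
  have hint : IsIntegral ℚ α := hα.isIntegral
  have h0 : α ≠ 0 := by
    have h1 : 1 < ‖α‖ := hexp α (minpoly.aeval ℚ α)
    intro h; rw [h] at h1; norm_num at h1
  haveI : FiniteDimensional ℚ (IntermediateField.adjoin ℚ {α} : IntermediateField ℚ ℂ) :=
    IntermediateField.adjoin.finiteDimensional hint
  haveI : Nonempty ((IntermediateField.adjoin ℚ {α} : IntermediateField ℚ ℂ) →ₐ[ℚ] ℂ) :=
    ⟨(IntermediateField.adjoin ℚ {α}).val⟩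
  set aK : (IntermediateField.adjoin ℚ {α} : IntermediateField ℚ ℂ) :=
    ⟨α, IntermediateField.mem_adjoin_simple_self ℚ α⟩ with haK
  have hroot : ∀ σ : (IntermediateField.adjoin ℚ {α} : IntermediateField ℚ ℂ) →ₐ[ℚ] ℂ,
      1 < ‖σ aK‖ := by
    intro σ
    apply hexp
    have h1 : minpoly ℚ α = minpoly ℚ aK := by
      have := minpoly.algHom_eq (IntermediateField.adjoin ℚ {α}).val
        (Subtype.val_injective) aK
      exact this
    rw [h1, Polynomial.aeval_algHom_apply, minpoly.aeval, map_zero]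
  -- m₀
  set m₀ : ℝ := Finset.univ.inf' Finset.univ_nonempty
    (fun σ : (IntermediateField.adjoin ℚ {α} : IntermediateField ℚ ℂ) →ₐ[ℚ] ℂ =>
      ‖σ aK‖) with hm₀
  have h1m : 1 < m₀ := (Finset.lt_inf'_iff _).mpr (fun σ _ => hroot σ)
  have hm₀pos : 0 < m₀ := lt_trans one_pos h1m
  have hm₀le : ∀ σ : (IntermediateField.adjoin ℚ {α} : IntermediateField ℚ ℂ) →ₐ[ℚ] ℂ,
      m₀ ≤ ‖σ aK‖ := fun σ =>
    Finset.inf'_le (fun τ : (IntermediateField.adjoin ℚ {α} : IntermediateField ℚ ℂ) →ₐ[ℚ] ℂ =>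
      ‖τ aK‖) (Finset.mem_univ σ)
  -- C
  have hRfin := crs_finite hα h0 hR
  set Cnn : NNReal := (hRfin.toFinset ×ˢ (Finset.univ :
      Finset ((IntermediateField.adjoin ℚ {α} : IntermediateField ℚ ℂ) →ₐ[ℚ] ℂ))).sup
      (fun p => ‖p.2 (embLift α p.1)‖₊) with hCnn
  set C : ℝ := (Cnn : ℝ) with hCdef
  have hC0 : 0 ≤ C := NNReal.coe_nonneg _
  have hCle : ∀ r ∈ R, ∀ σ : (IntermediateField.adjoin ℚ {α} : IntermediateField ℚ ℂ) →ₐ[ℚ] ℂ,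
      ‖σ (embLift α r)‖ ≤ C := by
    intro r hr σ
    have hmem : (r, σ) ∈ hRfin.toFinset ×ˢ Finset.univ :=
      Finset.mem_product.mpr ⟨hRfin.mem_toFinset.mpr hr, Finset.mem_univ _⟩
    have hle : ‖σ (embLift α r)‖₊ ≤ Cnn :=
      Finset.le_sup (f := fun p => ‖p.2 (embLift α p.1)‖₊) hmem
    have : (‖σ (embLift α r)‖₊ : ℝ) ≤ C := NNReal.coe_le_coe.mpr hle
    simpa [coe_nnnorm] using this
  -- constants
  set c : ℝ := C / (m₀ - 1) + 1 with hcdef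
  have hcpos : 0 < c := by
    have h1 : 0 ≤ C / (m₀ - 1) := div_nonneg hC0 (by linarith)
    rw [hcdef]; linarith
  set δ : ℝ := (m₀ - 1) / m₀ with hδdef
  have hδpos : 0 < δ := div_pos (by linarith) hm₀pos
  refine ⟨c, hcpos, ?_⟩
  intro β hβ
  -- the recursive bound
  have hstep : ∀ σ : (IntermediateField.adjoin ℚ {α} : IntermediateField ℚ ℂ) →ₐ[ℚ] ℂ, ∀ n : ℕ,
      ‖σ (embLift α (J^[n+1] β))‖ ≤
        (‖σ (embLift α (J^[n] β))‖ + C) / m₀ := by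
    intro σ n
    rw [Function.iterate_succ_apply']
    exact step_bound hR hJ σ (iter_mem hJ hβ n) hC0 (fun r hr => hCle r hr σ) hm₀pos (hm₀le σ)
  have habsorb : ∀ σ : (IntermediateField.adjoin ℚ {α} : IntermediateField ℚ ℂ) →ₐ[ℚ] ℂ, ∀ n : ℕ, ‖σ (embLift α (J^[n] β))‖ ≤ c →
      ‖σ (embLift α (J^[n+1] β))‖ ≤ c := by
    intro σ n hn
    refine le_trans (hstep σ n) ?_
    rw [div_le_iff₀ hm₀pos]
    have h1 : c * m₀ - c = c * (m₀ - 1) := by ring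
    have h2 : C ≤ c * (m₀ - 1) := by
      rw [hcdef]
      have : C / (m₀ - 1) * (m₀ - 1) = C := div_mul_cancel₀ C (by linarith : m₀ - 1 ≠ 0)
      nlinarith
    nlinarith
  have hdescent : ∀ σ : (IntermediateField.adjoin ℚ {α} : IntermediateField ℚ ℂ) →ₐ[ℚ] ℂ, ∀ n : ℕ, c < ‖σ (embLift α (J^[n] β))‖ →
      ‖σ (embLift α (J^[n+1] β))‖ ≤
        ‖σ (embLift α (J^[n] β))‖ - δ := by
    intro σ n hn
    refine le_trans (hstep σ n) ?_
    rw [div_le_iff₀ hm₀pos]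
    have h2 : C / (m₀ - 1) * (m₀ - 1) = C := div_mul_cancel₀ C (by linarith : m₀ - 1 ≠ 0)
    have h3 : δ * m₀ = m₀ - 1 := div_mul_cancel₀ (m₀ - 1) (ne_of_gt hm₀pos)
    have h4 : c * (m₀ - 1) = C + (m₀ - 1) := by rw [hcdef, add_mul, one_mul, h2]
    nlinarith [mul_pos (sub_pos.mpr hn) (sub_pos.mpr h1m), h3, h4]
  -- Mβ
  set Mβ : ℝ := Finset.univ.sup' Finset.univ_nonempty
    (fun σ : (IntermediateField.adjoin ℚ {α} : IntermediateField ℚ ℂ) →ₐ[ℚ] ℂ =>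
      ‖σ (embLift α β)‖) with hMβ
  have hMβle : ∀ σ : (IntermediateField.adjoin ℚ {α} : IntermediateField ℚ ℂ) →ₐ[ℚ] ℂ,
      ‖σ (embLift α β)‖ ≤ Mβ := fun σ =>
    Finset.le_sup' (fun τ : (IntermediateField.adjoin ℚ {α} : IntermediateField ℚ ℂ) →ₐ[ℚ] ℂ =>
      ‖τ (embLift α β)‖) (Finset.mem_univ σ)
  have claim : ∀ σ : (IntermediateField.adjoin ℚ {α} : IntermediateField ℚ ℂ) →ₐ[ℚ] ℂ, ∀ n : ℕ, ‖σ (embLift α (J^[n] β))‖ ≤ c ∨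
      ‖σ (embLift α (J^[n] β))‖ ≤ Mβ - n * δ := by
    intro σ n
    induction n with
    | zero => right; simpa using hMβle σ
    | succ n ih =>
        rcases ih with h | h
        · exact Or.inl (habsorb σ n h)
        · by_cases hc : ‖σ (embLift α (J^[n] β))‖ ≤ c
          · exact Or.inl (habsorb σ n hc)
          · push_neg at hc
            right
            have := hdescent σ n hc
            push_cast
            linarith
  obtain ⟨n₀, hn₀⟩ := exists_nat_gt (Mβ / δ)
  refine ⟨n₀, ?_⟩
  intro n hn σ h
  have hlt : Mβ - n * δ < 0 := by
    have h1 : Mβ < n₀ * δ := by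
      rw [div_lt_iff₀ hδpos] at hn₀; exact hn₀
    have h2 : (n₀ : ℝ) * δ ≤ n * δ := by
      apply mul_le_mul_of_nonneg_right _ (le_of_lt hδpos)
      exact_mod_cast hn
    linarith
  have hfin : ‖σ (embLift α (J^[n] β))‖ ≤ c := by
    rcases claim σ n with h' | h'
    · exact h'
    · have : (0:ℝ) ≤ ‖σ (embLift α (J^[n] β))‖ := norm_nonneg _
      linarith
  rwa [embLift_eq h] at hfin
end

section
/- Let α be an expanding algebraic number (an algebraic number all of whose conjugates, including α itself, have modulus greater than 1), R a complete residue system mod α in ℤ[α], and J the associated backward division map. Then ℤ[α] = R[α] if and only if ℘ = {J^{(n)}(0) : n ≥ 0}. -/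
open Polynomial

open IsDedekindDomain IsDedekindDomain.HeightOneSpectrum
open scoped Multiplicative


lemma assoc_le_of_count_le {A : Type*} [CommMonoidWithZero A] [IsCancelMulZero A] [UniqueFactorizationMonoid A]
    [DecidableEq (Associates A)] [∀ p : Associates A, Decidable (Irreducible p)]
    {a b : Associates A} (ha : a ≠ 0) (hb : b ≠ 0)
    (h : ∀ p : Associates A, Irreducible p → p.count a.factors ≤ p.count b.factors) : a ≤ b := by
  classical
  rw [← Associates.factors_le]
  obtain ⟨sa, h_sa⟩ := Associates.factors_eq_some_iff_ne_zero.mpr ha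
  obtain ⟨sb, h_sb⟩ := Associates.factors_eq_some_iff_ne_zero.mpr hb
  rw [h_sa, h_sb] at h ⊢
  rw [WithTop.coe_le_coe, Multiset.le_iff_count]
  rintro ⟨p, hp⟩
  have := h p hp
  rwa [Associates.count_some hp, Associates.count_some hp] at this

lemma dvd_of_intValuation_le {A : Type*} [CommRing A] [IsDedekindDomain A]
    {a b : A} (ha : a ≠ 0) (hb : b ≠ 0)
    (h : ∀ v : HeightOneSpectrum A, v.intValuationDef a ≤ v.intValuationDef b) : b ∣ a := by
  classical
  rw [← Ideal.span_singleton_le_span_singleton, ← Ideal.dvd_iff_le,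
    ← Associates.mk_le_mk_iff_dvd]
  refine assoc_le_of_count_le (Associates.mk_ne_zero.mpr ?_) (Associates.mk_ne_zero.mpr ?_) ?_
  · simpa only [Ne, Ideal.zero_eq_bot, Ideal.span_singleton_eq_bot] using hb
  · simpa only [Ne, Ideal.zero_eq_bot, Ideal.span_singleton_eq_bot] using ha
  · intro p hp
    obtain ⟨I, rfl⟩ := Associates.mk_surjective p
    have hIirr : Irreducible I := Associates.irreducible_mk.mp hp
    have hIprime : Prime I := UniqueFactorizationMonoid.irreducible_iff_prime.mp hIirr
    set v : HeightOneSpectrum A :=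
      ⟨I, Ideal.isPrime_of_prime hIprime, by simpa [Ideal.zero_eq_bot] using hIprime.ne_zero⟩
    have hva := h v
    rw [v.intValuationDef_if_neg ha, v.intValuationDef_if_neg hb, WithZero.exp_le_exp,
      neg_le_neg_iff, Int.ofNat_le] at hva
    exact hva

lemma mem_range_of_valuation_le_one {A K : Type*} [CommRing A] [IsDedekindDomain A] [Field K]
    [Algebra A K] [IsFractionRing A K] {y : K}
    (h : ∀ v : HeightOneSpectrum A, v.valuation K y ≤ 1) : ∃ z : A, algebraMap A K z = y := by
  obtain ⟨⟨a, b⟩, rfl⟩ := IsLocalization.mk'_surjective (nonZeroDivisors A) y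
  have hb0 : (b : A) ≠ 0 := nonZeroDivisors.coe_ne_zero b
  by_cases ha : a = 0
  · exact ⟨0, by simp [ha]⟩
  have key : ∀ v : HeightOneSpectrum A, v.intValuationDef a ≤ v.intValuationDef (b : A) := by
    intro v
    have hv := h v
    rw [valuation_of_mk'] at hv
    have hbv : v.intValuation (b : A) ≠ 0 := v.intValuation_ne_zero _ hb0
    rw [div_le_one₀ (lt_of_le_of_ne (zero_le') (Ne.symm hbv))] at hv
    exact hv
  obtain ⟨c, rfl⟩ := dvd_of_intValuation_le ha hb0 key
  refine ⟨c, ?_⟩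
  rw [eq_comm, IsLocalization.mk'_eq_iff_eq_mul]
  rw [map_mul]; ring

lemma finite_one_lt_valuation {A K : Type*} [CommRing A] [IsDedekindDomain A] [Field K]
    [Algebra A K] [IsFractionRing A K] (y : K) :
    {v : HeightOneSpectrum A | 1 < v.valuation K y}.Finite := by
  obtain ⟨⟨a, b⟩, rfl⟩ := IsLocalization.mk'_surjective (nonZeroDivisors A) y
  have hb0 : (b : A) ≠ 0 := nonZeroDivisors.coe_ne_zero b
  have hsub : {v : HeightOneSpectrum A | 1 < v.valuation K (IsLocalization.mk' K a b)}
      ⊆ {v : HeightOneSpectrum A | v.asIdeal ∣ Ideal.span {(b : A)}} := by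
    intro v hv
    rw [Set.mem_setOf_eq, valuation_of_mk'] at hv
    rw [Set.mem_setOf_eq, ← intValuation_lt_one_iff_dvd]
    by_contra hb1
    push_neg at hb1
    have hb1' : v.intValuation (b : A) = 1 := le_antisymm (v.intValuation_le_one _) hb1
    rw [hb1', div_one] at hv
    exact absurd (v.intValuation_le_one a) (not_le.mpr hv)
  refine (Ideal.finite_factors ?_).subset hsub
  simpa only [Ne, Ideal.zero_eq_bot, Ideal.span_singleton_eq_bot] using hb0

lemma exists_pow_mul_le (u D : WithZero (Multiplicative ℤ)) (hu0 : u ≠ 0) (hu : u < 1) (hD : D ≠ 0) :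
    ∃ n : ℕ, u ^ n * D ≤ 1 := by
  obtain ⟨m, rfl⟩ : ∃ m : ℤ, WithZero.exp m = u := ⟨_, WithZero.exp_log hu0⟩
  obtain ⟨d, rfl⟩ : ∃ d : ℤ, WithZero.exp d = D := ⟨_, WithZero.exp_log hD⟩
  refine ⟨d.toNat, ?_⟩
  rw [← WithZero.exp_nsmul, ← WithZero.exp_add, ← WithZero.exp_zero, WithZero.exp_le_exp]
  rw [← WithZero.exp_zero, WithZero.exp_lt_exp] at hu
  have h1 : m ≤ -1 := by omega
  rw [nsmul_eq_mul]
  have h2 : d ≤ (d.toNat : ℤ) :=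
    Int.self_le_toNat _
  have h3 : (0:ℤ) ≤ (d.toNat : ℤ) := Int.natCast_nonneg _
  nlinarith

open IntermediateField in
noncomputable def KF (α : ℂ) : IntermediateField ℚ ℂ := ℚ⟮α⟯

noncomputable def aK (α : ℂ) : KF α := ⟨α, IntermediateField.mem_adjoin_simple_self ℚ α⟩

lemma coe_aeval (α : ℂ) (P : Polynomial ℤ) :
    ((Polynomial.aeval (aK α) P : KF α) : ℂ) = Polynomial.aeval α P :=
  (Polynomial.aeval_algHom_apply (((KF α).val).restrictScalars ℤ) (aK α) P).symm

lemma zadj_mem_K {α z : ℂ} (hz : z ∈ Zadj α) : z ∈ KF α := by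
  obtain ⟨P, rfl⟩ := hz
  rw [← coe_aeval]
  exact (Polynomial.aeval (aK α) P).2

namespace Aux

variable {α : ℂ} {R : Set ℂ} {J : ℂ → ℂ}

lemma zadj_eq : Zadj α = ((Polynomial.aeval α : ℤ[X] →ₐ[ℤ] ℂ).range : Subalgebra ℤ ℂ) := by
  ext z; exact ⟨fun ⟨P, h⟩ => ⟨P, h⟩, fun ⟨P, h⟩ => ⟨P, h⟩⟩

lemma zadj_zero : (0 : ℂ) ∈ Zadj α := by rw [zadj_eq]; exact zero_mem _
lemma zadj_one : (1 : ℂ) ∈ Zadj α := by rw [zadj_eq]; exact one_mem _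
lemma zadj_self : α ∈ Zadj α := ⟨X, by simp⟩
lemma zadj_add {x y : ℂ} (hx : x ∈ Zadj α) (hy : y ∈ Zadj α) : x + y ∈ Zadj α := by
  rw [zadj_eq] at *; exact add_mem hx hy
lemma zadj_mul {x y : ℂ} (hx : x ∈ Zadj α) (hy : y ∈ Zadj α) : x * y ∈ Zadj α := by
  rw [zadj_eq] at *; exact mul_mem hx hy
lemma zadj_neg {x : ℂ} (hx : x ∈ Zadj α) : -x ∈ Zadj α := by
  rw [zadj_eq] at *; exact neg_mem hx
lemma zadj_sub {x y : ℂ} (hx : x ∈ Zadj α) (hy : y ∈ Zadj α) : x - y ∈ Zadj α := by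
  rw [zadj_eq] at *; exact sub_mem hx hy
lemma zadj_int (m : ℤ) : (m : ℂ) ∈ Zadj α := ⟨C m, by simp⟩
lemma zadj_pow {x : ℂ} (hx : x ∈ Zadj α) (n : ℕ) : x ^ n ∈ Zadj α := by
  rw [zadj_eq] at *; exact pow_mem hx n
lemma zadj_sum {s : Finset ℕ} {f : ℕ → ℂ} (hf : ∀ j ∈ s, f j ∈ Zadj α) :
    ∑ j ∈ s, f j ∈ Zadj α := by
  rw [zadj_eq] at *; exact sum_mem hf

lemma repSet_subset_Zadj (hR : R ⊆ Zadj α) : repSet α R ⊆ Zadj α := by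
  rintro z ⟨n, f, hf, rfl⟩
  exact zadj_sum fun j hj => zadj_mul (hR (hf j (Finset.mem_range_succ_iff.mp hj)))
    (zadj_pow zadj_self j)

section

variable (hα : IsAlgebraic ℚ α)
  (hexp : ∀ z : ℂ, aeval z (minpoly ℚ α) = 0 → 1 < ‖z‖)
include hα hexp

lemma abs_alpha : 1 < ‖α‖ := hexp α (minpoly.aeval ℚ α)

lemma alpha_ne_zero : α ≠ 0 := by
  intro h
  have := abs_alpha hα hexp
  rw [h] at this; norm_num at this

end

variable (hR : IsCRS α R) (hJ : IsJmap α R J) (hα0 : α ≠ 0)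

section
include hR hJ hα0

/-- Uniqueness property of `J`. -/
lemma J_eq {β r γ : ℂ} (hβ : β ∈ Zadj α) (hr : r ∈ R) (hγ : γ ∈ Zadj α)
    (h : β = r + α * γ) : J β = γ := by
  obtain ⟨hJβ, r', hr', h'⟩ := hJ β hβ
  have hrr : r' = r := by
    refine (hR.2 β hβ).unique ⟨hr', J β, hJβ, by linear_combination h'⟩
      ⟨hr, γ, hγ, by linear_combination h⟩
  subst hrr
  apply mul_left_cancel₀ hα0
  linear_combination h - h'

end

include hJ in
lemma iter_mem {β : ℂ} (hβ : β ∈ Zadj α) (n : ℕ) : J^[n] β ∈ Zadj α := by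
  induction n with
  | zero => simpa
  | succ n ih => rw [Function.iterate_succ_apply']; exact (hJ _ ih).1

include hR hJ hα0 in
/-- Every element of `R[α]` reaches `0` under iteration of `J`, in at least one step. -/
lemma reach_of_repSet {β : ℂ} (hβ : β ∈ repSet α R) : ∃ n, 1 ≤ n ∧ J^[n] β = 0 := by
  obtain ⟨n, f, hf, rfl⟩ := hβ
  induction n generalizing f with
  | zero =>
    refine ⟨1, le_refl 1, ?_⟩
    have h0 : f 0 ∈ R := hf 0 (le_refl 0)
    have : ∑ j ∈ Finset.range 1, f j * α ^ j = f 0 + α * 0 := by simp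
    simp only [Function.iterate_one]
    rw [J_eq hR hJ hα0 (repSet_subset_Zadj hR.1 ⟨0, f, hf, rfl⟩) h0 zadj_zero this]
  | succ n ih =>
    have hγR : (∑ j ∈ Finset.range (n + 1), f (j + 1) * α ^ j) ∈ repSet α R :=
      ⟨n, fun j => f (j + 1), fun j hj => hf (j + 1) (by omega), rfl⟩
    have hsplit : ∑ j ∈ Finset.range (n + 2), f j * α ^ j
        = f 0 + α * ∑ j ∈ Finset.range (n + 1), f (j + 1) * α ^ j := by
      rw [Finset.sum_range_succ' (fun j => f j * α ^ j) (n + 1), Finset.mul_sum]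
      rw [pow_zero, mul_one, add_comm]
      congr 1
      exact Finset.sum_congr rfl fun j _ => by ring
    have hJβ : J (∑ j ∈ Finset.range (n + 2), f j * α ^ j)
        = ∑ j ∈ Finset.range (n + 1), f (j + 1) * α ^ j :=
      J_eq hR hJ hα0 (repSet_subset_Zadj hR.1 ⟨n + 1, f, hf, rfl⟩) (hf 0 (by omega))
        (repSet_subset_Zadj hR.1 hγR) hsplit
    obtain ⟨m, hm1, hm⟩ := ih (fun j => f (j + 1)) (fun j hj => hf (j + 1) (by omega))
    exact ⟨m + 1, by omega, by rw [Function.iterate_succ_apply, hJβ, hm]⟩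

include hJ in
/-- If `β` reaches `0` in at least one step, then `β ∈ R[α]`. -/
lemma repSet_of_reach {β : ℂ} (hβ : β ∈ Zadj α) {n : ℕ} (h1 : 1 ≤ n) (h : J^[n] β = 0) :
    β ∈ repSet α R := by
  induction n generalizing β with
  | zero => omega
  | succ n ih =>
    obtain ⟨hJβ, r, hr, hsplit⟩ := hJ β hβ
    rcases Nat.eq_zero_or_pos n with hn | hn
    · subst hn
      simp only [zero_add, Function.iterate_one] at h
      rw [h, mul_zero, add_zero] at hsplit
      exact ⟨0, fun _ => r, fun j _ => hr, by rw [hsplit]; simp⟩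
    · have hJn : J^[n] (J β) = 0 := by rw [← Function.iterate_succ_apply]; exact h
      obtain ⟨m, g, hg, hsum⟩ := ih hJβ hn hJn
      refine ⟨m + 1, fun j => (Nat.casesOn j r g : ℂ), fun j hj => ?_, ?_⟩
      · cases j with
        | zero => exact hr
        | succ i => exact hg i (by omega)
      · rw [Finset.sum_range_succ' (fun j => (Nat.casesOn j r g : ℂ) * α ^ j) (m + 1)]
        rw [hsplit, hsum, Finset.mul_sum, pow_zero, mul_one, add_comm]
        congr 1
        exact Finset.sum_congr rfl fun j _ => by ring


include hR hJ hα0 in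
lemma forward (h : repSet α R = Zadj α) :
    perSet α J = {β | ∃ n : ℕ, J^[n] 0 = β} := by
  obtain ⟨N, hN1, hN⟩ := reach_of_repSet hR hJ hα0 (h ▸ zadj_zero : (0:ℂ) ∈ repSet α R)
  ext β
  constructor
  · rintro ⟨hβZ, n, hn1, hnβ⟩
    obtain ⟨M, hM1, hM⟩ := reach_of_repSet hR hJ hα0 (h ▸ hβZ : β ∈ repSet α R)
    have hper : ∀ q, J^[n * q] β = β := by
      intro q; induction q with
      | zero => simp
      | succ q ih => rw [Nat.mul_succ, Function.iterate_add_apply, hnβ, ih]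
    have hge : M ≤ n * M := Nat.le_mul_of_pos_left M hn1
    refine ⟨n * M - M, ?_⟩
    calc J^[n * M - M] (0:ℂ) = J^[n * M - M] (J^[M] β) := by rw [hM]
      _ = J^[n * M] β := by rw [← Function.iterate_add_apply, Nat.sub_add_cancel hge]
      _ = β := hper M
  · rintro ⟨m, rfl⟩
    refine ⟨iter_mem hJ zadj_zero m, N, hN1, ?_⟩
    rw [← Function.iterate_add_apply, Nat.add_comm N m, Function.iterate_add_apply, hN]

section
variable (hα : IsAlgebraic ℚ α)
  (hexp : ∀ z : ℂ, aeval z (minpoly ℚ α) = 0 → 1 < ‖z‖)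
include hα hexp hR hJ

lemma rfinite : R.Finite := by
  classical
  have hα0 : α ≠ 0 := alpha_ne_zero hα hexp
  obtain ⟨P0, hP0ne, hP0z⟩ := (IsFractionRing.isAlgebraic_iff ℤ ℚ ℂ).mpr hα
  have main : ∀ n (P : ℤ[X]), P.natDegree ≤ n → P ≠ 0 → aeval α P = 0 →
      ∃ Q : ℤ[X], Q.coeff 0 ≠ 0 ∧ aeval α Q = 0 := by
    intro n
    induction n with
    | zero =>
      intro P hdeg hne hz
      refine ⟨P, fun h0 => hne ?_, hz⟩
      have hPC := Polynomial.eq_C_of_natDegree_le_zero hdeg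
      rw [hPC, h0, map_zero]
    | succ n ih =>
      intro P hdeg hne hz
      by_cases h0 : P.coeff 0 ≠ 0
      · exact ⟨P, h0, hz⟩
      push_neg at h0
      have hPX : X * P.divX = P := by
        have h := Polynomial.X_mul_divX_add P
        rwa [h0, map_zero, add_zero] at h
      have hdvx_ne : P.divX ≠ 0 := by
        intro h; apply hne; rw [← hPX, h, mul_zero]
      have hdvx_z : aeval α P.divX = 0 := by
        have h : aeval α (X * P.divX) = 0 := by rw [hPX]; exact hz
        rw [map_mul, aeval_X] at h
        exact (mul_eq_zero.mp h).resolve_left hα0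
      refine ih P.divX ?_ hdvx_ne hdvx_z
      have h := Polynomial.natDegree_divX_eq_natDegree_tsub_one (p := P)
      omega
  obtain ⟨Q, hQ0, hQz⟩ := main P0.natDegree P0 le_rfl hP0ne hP0z
  have hdiv : ∃ γ, γ ∈ Zadj α ∧ ((Q.coeff 0 : ℤ) : ℂ) = α * γ := by
    refine ⟨-(aeval α Q.divX), zadj_neg ⟨Q.divX, rfl⟩, ?_⟩
    have h1 := congrArg (aeval α) (Polynomial.X_mul_divX_add Q)
    rw [map_add, map_mul, aeval_X, aeval_C, hQz] at h1
    simp only [eq_intCast] at h1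
    linear_combination h1
  obtain ⟨γ0, hγ0Z, hγ0⟩ := hdiv
  haveI : NeZero (Q.coeff 0).natAbs := ⟨Int.natAbs_ne_zero.mpr hQ0⟩
  set g : ℂ → ZMod (Q.coeff 0).natAbs := fun r =>
    if h : r ∈ Zadj α then ((h.choose.coeff 0 : ℤ) : ZMod (Q.coeff 0).natAbs) else 0 with hg
  have hginj : Set.InjOn g R := by
    intro r hrR r' hr'R hgr
    have hrZ : r ∈ Zadj α := hR.1 hrR
    have hr'Z : r' ∈ Zadj α := hR.1 hr'R
    rw [hg] at hgr
    simp only [dif_pos hrZ, dif_pos hr'Z] at hgr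
    have hPe : aeval α hrZ.choose = r := hrZ.choose_spec
    have hP'e : aeval α hr'Z.choose = r' := hr'Z.choose_spec
    set P := hrZ.choose
    set P' := hr'Z.choose
    have hdvd : Q.coeff 0 ∣ (P'.coeff 0 - P.coeff 0) := by
      rw [← Int.natAbs_dvd]
      exact (ZMod.intCast_eq_intCast_iff _ _ _).mp hgr |>.dvd
    obtain ⟨t, ht⟩ := hdvd
    have hkey : ∃ Γ, Γ ∈ Zadj α ∧ r - r' = α * Γ := by
      refine ⟨aeval α P.divX - aeval α P'.divX - γ0 * t,
        zadj_sub (zadj_sub ⟨P.divX, rfl⟩ ⟨P'.divX, rfl⟩) (zadj_mul hγ0Z (zadj_int t)), ?_⟩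
      have e1 := congrArg (aeval α) (Polynomial.X_mul_divX_add P)
      have e2 := congrArg (aeval α) (Polynomial.X_mul_divX_add P')
      rw [map_add, map_mul, aeval_X, aeval_C, hPe] at e1
      rw [map_add, map_mul, aeval_X, aeval_C, hP'e] at e2
      simp only [eq_intCast] at e1 e2
      have htc : ((P'.coeff 0 : ℤ) : ℂ) - ((P.coeff 0 : ℤ) : ℂ)
          = ((Q.coeff 0 : ℤ) : ℂ) * (t : ℂ) := by exact_mod_cast congrArg (Int.cast : ℤ → ℂ) ht
      linear_combination e2 - e1 - htc - (t : ℂ) * hγ0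
    obtain ⟨Γ, hΓZ, hΓ⟩ := hkey
    exact (hR.2 r hrZ).unique ⟨hrR, 0, zadj_zero, by ring⟩ ⟨hr'R, Γ, hΓZ, hΓ⟩
  exact Set.Finite.of_finite_image (Set.toFinite _) hginj

set_option maxHeartbeats 2000000 in
lemma exists_repeat {β : ℂ} (hβ : β ∈ Zadj α) :
    ∃ k m : ℕ, k < m ∧ J^[k] β = J^[m] β := by
  classical
  have hα0 : α ≠ 0 := alpha_ne_zero hα hexp
  haveI hFD : FiniteDimensional ℚ (KF α) :=
    IntermediateField.adjoin.finiteDimensional hα.isIntegral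
  haveI : NumberField (KF α) := ⟨⟩
  have hRfin : R.Finite := rfinite hR hJ hα hexp
  have hxmem : ∀ k, J^[k] β ∈ Zadj α := fun k => iter_mem hJ hβ k
  set x : ℕ → KF α := fun k => ⟨J^[k] β, zadj_mem_K (hxmem k)⟩ with hxdef
  have hstep : ∀ k, ∃ r : KF α, (r : ℂ) ∈ R ∧ x k = r + aK α * x (k + 1) := by
    intro k
    obtain ⟨hmem, r, hr, hsplit⟩ := hJ _ (hxmem k)
    refine ⟨⟨r, zadj_mem_K (hR.1 hr)⟩, hr, Subtype.ext ?_⟩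
    show J^[k] β = r + α * (J^[k + 1] β)
    rw [Function.iterate_succ_apply']
    exact hsplit
  choose rr hrrR hrr using hstep
  have hroot : ∀ φ : KF α →+* ℂ, 1 < ‖φ (aK α)‖ := by
    intro φ
    apply hexp
    have h2 : aeval (aK α) (minpoly ℚ α) = 0 := by
      have h1 : minpoly ℚ (aK α) = minpoly ℚ α := by
        conv_rhs => rw [show α = algebraMap (KF α) ℂ (aK α) from rfl]
        exact (minpoly.algebraMap_eq (algebraMap (KF α) ℂ).injective (aK α)).symm
      rw [← h1]; exact minpoly.aeval ℚ (aK α)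
    have h3 := congrArg φ.toRatAlgHom h2
    rw [map_zero] at h3
    rw [← Polynomial.aeval_algHom_apply] at h3
    exact h3
  have hRKfin : {y : KF α | (y : ℂ) ∈ R}.Finite :=
    hRfin.preimage (Set.injOn_of_injective Subtype.coe_injective)
  have harch : ∀ φ : KF α →+* ℂ, ∃ Bφ : ℝ, ∀ k, ‖φ (x k)‖ ≤ Bφ := by
    intro φ
    obtain ⟨C, hC⟩ := (hRKfin.image fun y => ‖φ y‖).bddAbove
    have hCb : ∀ k, ‖φ (rr k)‖ ≤ C := fun k => hC ⟨rr k, hrrR k, rfl⟩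
    have hρ : 1 < ‖φ (aK α)‖ := by exact hroot φ
    refine ⟨max ‖φ (x 0)‖ (C / (‖φ (aK α)‖ - 1)), fun k => ?_⟩
    induction k with
    | zero => exact le_max_left _ _
    | succ k ih =>
      have hs := congrArg φ (hrr k)
      rw [map_add, map_mul] at hs
      have hφa : φ (aK α) ≠ 0 := by
        intro h; rw [h] at hρ; simp at hρ; linarith
      have hx1 : φ (x (k+1)) = (φ (x k) - φ (rr k)) / φ (aK α) := by
        field_simp
        linear_combination -hs
      rw [hx1, norm_div]
      rw [div_le_iff₀ (by linarith : (0:ℝ) < ‖φ (aK α)‖)]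
      have hCρ : C / (‖φ (aK α)‖ - 1) ≤ max ‖φ (x 0)‖ (C / (‖φ (aK α)‖ - 1)) :=
        le_max_right _ _
      have hC0 : 0 ≤ C := le_trans (norm_nonneg _) (hCb 0)
      have hM0 : 0 ≤ max ‖φ (x 0)‖ (C / (‖φ (aK α)‖ - 1)) :=
        le_trans (norm_nonneg _) (le_max_left _ _)
      calc ‖φ (x k) - φ (rr k)‖ ≤ ‖φ (x k)‖ + ‖φ (rr k)‖ := norm_sub_le _ _
        _ ≤ max ‖φ (x 0)‖ (C / (‖φ (aK α)‖ - 1)) + C := add_le_add ih (hCb k)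
        _ ≤ max ‖φ (x 0)‖ (C / (‖φ (aK α)‖ - 1)) * ‖φ (aK α)‖ := by
            rw [div_le_iff₀ (by linarith : (0:ℝ) < ‖φ (aK α)‖ - 1)] at hCρ
            nlinarith
  choose Bφ hBφ using harch
  obtain ⟨B, hB⟩ := Finset.exists_le (Finset.image Bφ Finset.univ)
  have hBall : ∀ k (φ : KF α →+* ℂ), ‖φ (x k)‖ ≤ B := fun k φ =>
    le_trans (hBφ φ k) (hB _ (Finset.mem_image_of_mem _ (Finset.mem_univ φ)))
  -- valuation bounds
  have hgood : ∀ v : HeightOneSpectrum (NumberField.RingOfIntegers (KF α)),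
      v.valuation (KF α) (aK α) ≤ 1 → ∀ y : KF α, (y : ℂ) ∈ Zadj α → v.valuation (KF α) y ≤ 1 := by
    intro v hv y hy
    obtain ⟨P, hP⟩ := hy
    have hyP : y = aeval (aK α) P := by
      apply Subtype.coe_injective
      show (y : ℂ) = ((aeval (aK α) P : KF α) : ℂ)
      rw [coe_aeval]
      exact hP.symm
    rw [hyP]
    have hadj : ∀ z : KF α, z ∈ Algebra.adjoin ℤ {aK α} → v.valuation (KF α) z ≤ 1 := by
      intro z hz
      induction hz using Algebra.adjoin_induction with
      | mem w hw =>
        rw [Set.mem_singleton_iff] at hw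
        rw [hw]; exact hv
      | algebraMap n =>
        have : (algebraMap ℤ (KF α)) n
            = algebraMap (NumberField.RingOfIntegers (KF α)) (KF α) ((n : ℤ) : _) := by
          simp
        rw [this]
        exact v.valuation_le_one _
      | add a b ha hb iha ihb => exact le_trans ((v.valuation (KF α)).map_add a b) (max_le iha ihb)
      | mul a b ha hb iha ihb => rw [map_mul]; exact mul_le_one' iha ihb
    exact hadj _ (Polynomial.aeval_mem_adjoin_singleton ℤ (aK α))
  set Bad : Set (HeightOneSpectrum (NumberField.RingOfIntegers (KF α))) :=
    {v | 1 < v.valuation (KF α) (aK α)} with hBadDef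
  have hBadFin : Bad.Finite := finite_one_lt_valuation _
  have hCv : ∀ v : HeightOneSpectrum (NumberField.RingOfIntegers (KF α)),
      ∃ Cv : WithZero (Multiplicative ℤ), ∀ k, v.valuation (KF α) (rr k : KF α) ≤ Cv := by
    intro v
    obtain ⟨Cv, hCvle⟩ := (hRKfin.image fun y => v.valuation (KF α) y).bddAbove
    exact ⟨Cv, fun k => hCvle ⟨rr k, hrrR k, rfl⟩⟩
  choose Cv hCvle using hCv
  set D : HeightOneSpectrum (NumberField.RingOfIntegers (KF α)) → WithZero (Multiplicative ℤ) :=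
    fun v => max (max (v.valuation (KF α) (x 0)) (Cv v)) 1 with hDdef
  have hD1 : ∀ v, (1:WithZero (Multiplicative ℤ)) ≤ D v := fun v => le_max_right _ _
  have hD0 : ∀ v, D v ≠ 0 := fun v =>
    ne_of_gt (lt_of_lt_of_le zero_lt_one (hD1 v))
  have hbadBound : ∀ v, 1 ≤ v.valuation (KF α) (aK α) → ∀ k, v.valuation (KF α) (x k) ≤ D v := by
    intro v hv k
    induction k with
    | zero => exact le_trans (le_max_left _ _) (le_max_left _ _)
    | succ k ih =>
      have heq : v.valuation (KF α) (aK α) * v.valuation (KF α) (x (k+1)) = v.valuation (KF α) (x k - rr k) := by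
        rw [← map_mul]; congr 1; rw [hrr k]; ring
      calc v.valuation (KF α) (x (k+1)) ≤ v.valuation (KF α) (aK α) * v.valuation (KF α) (x (k+1)) :=
            le_mul_of_one_le_left' hv
        _ = v.valuation (KF α) (x k - rr k) := heq
        _ ≤ max (v.valuation (KF α) (x k)) (v.valuation (KF α) (rr k)) := (v.valuation (KF α)).map_sub _ _
        _ ≤ D v := max_le (le_trans ih le_rfl)
            (le_trans (hCvle v k) (le_trans (le_max_right _ _) (le_max_left _ _)))
  have hcex : ∀ v ∈ Bad, ∃ cv : NumberField.RingOfIntegers (KF α), cv ≠ 0 ∧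
      v.valuation (KF α) (algebraMap _ (KF α) cv) * D v ≤ 1 := by
    intro v hv
    obtain ⟨b, hbmem, hb0⟩ := Submodule.exists_mem_ne_zero_of_ne_bot v.ne_bot
    have hlt : v.valuation (KF α) (algebraMap _ (KF α) b) < 1 := by
      rw [valuation_of_algebraMap, intValuation_apply]
      exact (v.intValuation_lt_one_iff_dvd b).mpr (Ideal.dvd_span_singleton.mpr hbmem)
    have hne : v.valuation (KF α) (algebraMap _ (KF α) b) ≠ 0 := by
      rw [valuation_of_algebraMap, intValuation_apply]
      exact v.intValuation_ne_zero b hb0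
    obtain ⟨n, hn⟩ := exists_pow_mul_le _ _ hne hlt (hD0 v)
    refine ⟨b ^ n, pow_ne_zero n hb0, ?_⟩
    rw [map_pow, map_pow]
    exact hn
  set F : HeightOneSpectrum (NumberField.RingOfIntegers (KF α)) →
      NumberField.RingOfIntegers (KF α) :=
    fun v => if h : v ∈ Bad then (hcex v h).choose else 1 with hFdef
  have hF0 : ∀ v, F v ≠ 0 := by
    intro v; rw [hFdef]; dsimp only; split_ifs with h
    exacts [(hcex v h).choose_spec.1, one_ne_zero]
  have hFval : ∀ v (h : v ∈ Bad),
      v.valuation (KF α) (algebraMap _ (KF α) (F v)) * D v ≤ 1 := by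
    intro v h; rw [hFdef]; dsimp only; rw [dif_pos h]
    exact (hcex v h).choose_spec.2
  set cO : NumberField.RingOfIntegers (KF α) := ∏ v ∈ hBadFin.toFinset, F v with hcOdef
  set c : KF α := algebraMap _ (KF α) cO with hcdef
  have hc0 : c ≠ 0 := by
    rw [hcdef]
    rw [(map_ne_zero_iff _ (IsFractionRing.injective
      (NumberField.RingOfIntegers (KF α)) (KF α)))]
    exact Finset.prod_ne_zero_iff.mpr fun v _ => hF0 v
  have hcle : ∀ w : HeightOneSpectrum (NumberField.RingOfIntegers (KF α)),
      w.valuation (KF α) c ≤ 1 := fun w => w.valuation_le_one cO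
  have hcbad : ∀ v ∈ Bad, v.valuation (KF α) c * D v ≤ 1 := by
    intro v hv
    have hsplit : cO = F v * ∏ w ∈ hBadFin.toFinset.erase v, F w :=
      (Finset.mul_prod_erase _ _ (hBadFin.mem_toFinset.mpr hv)).symm
    have hle : v.valuation (KF α) c ≤ v.valuation (KF α) (algebraMap _ (KF α) (F v)) := by
      rw [hcdef, hsplit, map_mul, map_mul]
      exact mul_le_of_le_one_right' (v.valuation_le_one _)
    exact le_trans (mul_le_mul_left hle (D v)) (hFval v hv)
  have hint : ∀ k, IsIntegral ℤ (c * x k) := by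
    intro k
    have hval : ∀ w : HeightOneSpectrum (NumberField.RingOfIntegers (KF α)),
        w.valuation (KF α) (c * x k) ≤ 1 := by
      intro w
      rw [map_mul]
      by_cases hw : w ∈ Bad
      · exact le_trans (mul_le_mul_right (hbadBound w (le_of_lt hw) k) _) (hcbad w hw)
      · have h1 : w.valuation (KF α) (aK α) ≤ 1 := not_lt.mp hw
        exact mul_le_one' (hcle w) (hgood w h1 (x k) (hxmem k))
    obtain ⟨z, hz⟩ := mem_range_of_valuation_le_one hval
    rw [← hz]
    exact NumberField.RingOfIntegers.isIntegral_coe z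
  obtain ⟨Bc, hBc⟩ := Finset.exists_le
    (Finset.image (fun φ : KF α →+* ℂ => ‖φ c‖) Finset.univ)
  have hnorm : ∀ k (φ : KF α →+* ℂ), ‖φ (c * x k)‖ ≤ max Bc 0 * max B 0 := by
    intro k φ
    rw [map_mul, norm_mul]
    apply mul_le_mul
    · exact le_trans (hBc _ (Finset.mem_image_of_mem _ (Finset.mem_univ φ))) (le_max_left _ _)
    · exact le_trans (hBall k φ) (le_max_left _ _)
    · exact norm_nonneg _
    · exact le_max_right _ _
  have hfin := NumberField.Embeddings.finite_of_norm_le (KF α) ℂ (max Bc 0 * max B 0)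
  have hmaps : Set.MapsTo (fun k : ℕ => c * x k) Set.univ
      {y : KF α | IsIntegral ℤ y ∧ ∀ φ : KF α →+* ℂ, ‖φ y‖ ≤ max Bc 0 * max B 0} :=
    fun k _ => ⟨hint k, fun φ => hnorm k φ⟩
  obtain ⟨k, -, m, -, hkm, heq⟩ :=
    Set.infinite_univ.exists_ne_map_eq_of_mapsTo hmaps hfin
  have hxkm : x k = x m := mul_left_cancel₀ hc0 heq
  have hJkm : J^[k] β = J^[m] β := congrArg Subtype.val hxkm
  rcases Nat.lt_or_ge k m with h | h
  · exact ⟨k, m, h, hJkm⟩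
  · exact ⟨m, k, by omega, hJkm.symm⟩


lemma backward (h : perSet α J = {β | ∃ n : ℕ, J^[n] 0 = β}) :
    repSet α R = Zadj α := by
  have hα0 := alpha_ne_zero hα hexp
  have h0orb : (0:ℂ) ∈ perSet α J := by rw [h]; exact ⟨0, rfl⟩
  obtain ⟨-, N, hN1, hN⟩ := h0orb
  have hNq : ∀ q, J^[N * q] (0:ℂ) = 0 := by
    intro q; induction q with
    | zero => simp
    | succ q ih => rw [Nat.mul_succ, Function.iterate_add_apply, hN, ih]
  apply Set.eq_of_subset_of_subset (repSet_subset_Zadj hR.1)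
  intro β hβ
  obtain ⟨k, m, hkm, hrep⟩ := exists_repeat hR hJ hα hexp hβ
  have hkper : J^[k] β ∈ perSet α J :=
    ⟨iter_mem hJ hβ k, m - k, by omega, by
      rw [← Function.iterate_add_apply, Nat.sub_add_cancel (le_of_lt hkm), ← hrep]⟩
  rw [h] at hkper
  obtain ⟨s, hs⟩ := hkper
  have hNs : s + 1 ≤ N * (s + 1) := Nat.le_mul_of_pos_left _ hN1
  have ht : J^[(N * (s + 1) - s) + k] β = 0 := by
    rw [Function.iterate_add_apply, ← hs, ← Function.iterate_add_apply,
      Nat.sub_add_cancel (by omega)]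
    exact hNq (s + 1)
  exact repSet_of_reach hJ hβ (n := (N * (s + 1) - s) + k) (by omega) ht

end

end Aux


/-- Corollary 2 (iii): for an expanding algebraic number `α`, a CRS `R` and the associated
map `J`, one has `ℤ[α] = R[α]` if and only if `℘ = {J^{(n)}(0) : n ≥ 0}`. -/
theorem representation_iff_perSet_orbit_zero (α : ℂ) (hα : IsAlgebraic ℚ α)
    (hexp : ∀ z : ℂ, aeval z (minpoly ℚ α) = 0 → 1 < ‖z‖)
    (R : Set ℂ) (hR : IsCRS α R) (J : ℂ → ℂ) (hJ : IsJmap α R J) :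
    repSet α R = Zadj α ↔ perSet α J = {β | ∃ n : ℕ, J^[n] 0 = β} :=
  ⟨fun h => Aux.forward hR hJ (Aux.alpha_ne_zero hα hexp) h,
   fun h => Aux.backward hR hJ hα hexp h⟩
end

section
/- Let α be an expanding algebraic number (an algebraic number all of whose conjugates, including α itself, have modulus greater than 1), R a complete residue system mod α in ℤ[α], and J the associated backward division map. Then ℤ[α] = R[α] and 0 ∈ R hold if and only if ℘ = {0}. -/
open Polynomial IntermediateField NumberField IsDedekindDomain

section Aux

variable {α : ℂ} {R : Set ℂ} {J : ℂ → ℂ}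

lemma mem_Zadj_iff {z : ℂ} : z ∈ Zadj α ↔ z ∈ Algebra.adjoin ℤ {α} := by
  rw [Algebra.adjoin_singleton_eq_range_aeval]
  exact ⟨fun ⟨P, hP⟩ => ⟨P, hP⟩, fun ⟨P, hP⟩ => ⟨P, hP⟩⟩

lemma Zadj_zero : (0 : ℂ) ∈ Zadj α := ⟨0, by simp⟩

lemma Zadj_add {x y : ℂ} (hx : x ∈ Zadj α) (hy : y ∈ Zadj α) : x + y ∈ Zadj α := by
  rw [mem_Zadj_iff] at *; exact add_mem hx hy

lemma Zadj_mul {x y : ℂ} (hx : x ∈ Zadj α) (hy : y ∈ Zadj α) : x * y ∈ Zadj α := by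
  rw [mem_Zadj_iff] at *; exact mul_mem hx hy

lemma Zadj_neg {x : ℂ} (hx : x ∈ Zadj α) : -x ∈ Zadj α := by
  rw [mem_Zadj_iff] at *; exact neg_mem hx

lemma Zadj_sub {x y : ℂ} (hx : x ∈ Zadj α) (hy : y ∈ Zadj α) : x - y ∈ Zadj α := by
  rw [mem_Zadj_iff] at *; exact sub_mem hx hy

lemma Zadj_sum {s : Finset ℕ} {f : ℕ → ℂ} (hf : ∀ j ∈ s, f j ∈ Zadj α) :
    (∑ j ∈ s, f j) ∈ Zadj α := by
  rw [mem_Zadj_iff]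
  exact Subalgebra.sum_mem _ (fun j hj => mem_Zadj_iff.mp (hf j hj))

lemma Zadj_self : α ∈ Zadj α := ⟨X, by simp⟩

lemma Zadj_pow (n : ℕ) : α ^ n ∈ Zadj α := ⟨X ^ n, by simp⟩

/-- The key uniqueness consequence of a CRS: the `J`-image is determined. -/
lemma Jstep (hR : IsCRS α R) (hJ : IsJmap α R J) (hα0 : α ≠ 0)
    {β s γ : ℂ} (hβ : β ∈ Zadj α) (hs : s ∈ R) (hγ : γ ∈ Zadj α) (h : β = s + α * γ) :
    J β = γ := by
  obtain ⟨hJβ, r, hrR, hr⟩ := hJ β hβ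
  obtain ⟨x, -, hun⟩ := hR.2 β hβ
  have h1 : r = x := hun r ⟨hrR, J β, hJβ, by linear_combination hr⟩
  have h2 : s = x := hun s ⟨hs, γ, hγ, by linear_combination h⟩
  have h3 : α * J β = α * γ := by
    have h4 : r + α * J β = s + α * γ := hr.symm.trans h
    rw [h1, h2] at h4
    exact add_left_cancel h4
  exact mul_left_cancel₀ hα0 h3

/-- `J` strips the lowest digit of an `R`-representation. -/
lemma Jdigit (hR : IsCRS α R) (hJ : IsJmap α R J) (hα0 : α ≠ 0)
    (n : ℕ) (f : ℕ → ℂ) (β : ℂ) (hf : ∀ j, f j ∈ R)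
    (hβ : β = ∑ j ∈ Finset.range (n + 1), f j * α ^ j) :
    J β = ∑ j ∈ Finset.range n, f (j + 1) * α ^ j := by
  have hβZ : β ∈ Zadj α := by
    rw [hβ]; exact Zadj_sum (fun j _ => Zadj_mul (hR.1 (hf j)) (Zadj_pow j))
  have hγZ : (∑ j ∈ Finset.range n, f (j + 1) * α ^ j) ∈ Zadj α :=
    Zadj_sum (fun j _ => Zadj_mul (hR.1 (hf (j + 1))) (Zadj_pow j))
  refine Jstep hR hJ hα0 hβZ (hf 0) hγZ ?_
  rw [hβ, Finset.sum_range_succ' (fun j => f j * α ^ j) n, Finset.mul_sum]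
  rw [pow_zero, mul_one, add_comm]
  congr 1
  exact Finset.sum_congr rfl fun i _ => by ring

/-- there is a nonzero integer in `α·ℤ[α]`. -/
lemma exists_int_multiple (hα : IsAlgebraic ℚ α) (hα0 : α ≠ 0) :
    ∃ a : ℤ, a ≠ 0 ∧ ∃ q ∈ Zadj α, (a : ℂ) = α * q := by
  have halgZ : IsAlgebraic ℤ α := (IsFractionRing.isAlgebraic_iff ℤ ℚ ℂ).mpr hα
  obtain ⟨P0, hP0ne, hP0⟩ := halgZ
  have key : ∀ (n : ℕ) (P : ℤ[X]), P.natDegree ≤ n → P ≠ 0 → aeval α P = 0 →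
      ∃ a : ℤ, a ≠ 0 ∧ ∃ q ∈ Zadj α, (a : ℂ) = α * q := by
    intro n
    induction n with
    | zero =>
      intro P hdeg hne hev
      exfalso
      have : P = C (P.coeff 0) := Polynomial.eq_C_of_natDegree_le_zero hdeg
      rw [this] at hev hne
      simp only [aeval_C, eq_intCast, map_intCast] at hev
      have : P.coeff 0 = 0 := by exact_mod_cast hev
      rw [this] at hne
      simp at hne
    | succ n ih =>
      intro P hdeg hne hev
      by_cases hc : P.coeff 0 = 0
      · obtain ⟨Q, hQ⟩ : X ∣ P := Polynomial.X_dvd_iff.mpr hc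
        have hQne : Q ≠ 0 := by rintro rfl; simp at hQ; exact hne hQ
        have hQev : aeval α Q = 0 := by
          rw [hQ] at hev
          simp only [map_mul, aeval_X] at hev
          exact (mul_eq_zero.mp hev).resolve_left hα0
        have hQdeg : Q.natDegree ≤ n := by
          have : P.natDegree = 1 + Q.natDegree := by
            rw [hQ, Polynomial.natDegree_mul Polynomial.X_ne_zero hQne, Polynomial.natDegree_X]
          omega
        exact ih Q hQdeg hQne hQev
      · refine ⟨P.coeff 0, hc, ?_⟩
        obtain ⟨Q, hQ⟩ : X ∣ (P - C (P.coeff 0)) := by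
          rw [Polynomial.X_dvd_iff]
          simp
        refine ⟨-(aeval α Q), ⟨-Q, by simp⟩, ?_⟩
        have : aeval α (P - C (P.coeff 0)) = aeval α (X * Q) := by rw [hQ]
        simp only [map_sub, aeval_C, map_mul, aeval_X, hev, eq_intCast, map_intCast] at this
        -- this : 0 - (P.coeff 0 : ℂ) = α * aeval α Q
        push_cast at this ⊢
        linear_combination -this
  exact key P0.natDegree P0 le_rfl hP0ne hP0

lemma R_finite (hα : IsAlgebraic ℚ α) (hα0 : α ≠ 0) (hR : IsCRS α R) : R.Finite := by
  obtain ⟨a, ha0, q, hqZ, hq⟩ := exists_int_multiple hα hα0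
  haveI : NeZero a.natAbs := ⟨Int.natAbs_ne_zero.mpr ha0⟩
  have hsub : ∀ r : R, ∃ P : ℤ[X], aeval α P = (r : ℂ) := fun r => hR.1 r.2
  choose c hc using hsub
  have hcongr : ∀ r : R, (r : ℂ) - ((c r).coeff 0 : ℂ) = α * aeval α ((c r).divX) := by
    intro r
    have hdvd : (c r) = (c r).divX * X + C ((c r).coeff 0) := (Polynomial.divX_mul_X_add (c r)).symm
    have := congrArg (aeval α) hdvd
    simp only [map_add, map_mul, aeval_X, aeval_C, hc, eq_intCast, map_intCast] at this
    push_cast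
    linear_combination this
  set f : R → ZMod a.natAbs := fun r => ((c r).coeff 0 : ZMod a.natAbs) with hf
  have hinj : Function.Injective f := by
    intro r s hrs
    have hdvd : (a : ℤ) ∣ ((c s).coeff 0 - (c r).coeff 0) := by
      have h1 := (ZMod.intCast_eq_intCast_iff _ _ _).mp hrs
      exact Int.natAbs_dvd.mp h1.dvd
    obtain ⟨t, ht⟩ := hdvd
    -- (r : ℂ) - s ∈ α * Zadj α  (we show s - r = α * γ)
    have hγ : ∃ γ ∈ Zadj α, (s : ℂ) - (r : ℂ) = α * γ := by
      refine ⟨aeval α ((c s).divX) - aeval α ((c r).divX) + q * (t : ℂ), ?_, ?_⟩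
      · exact Zadj_add (Zadj_sub ⟨(c s).divX, rfl⟩ ⟨(c r).divX, rfl⟩)
          (Zadj_mul hqZ ⟨C t, by simp [eq_intCast]⟩)
      · have h2 := hcongr r
        have h3 := hcongr s
        have h4 : ((c s).coeff 0 : ℂ) - ((c r).coeff 0 : ℂ) = (a : ℂ) * (t : ℂ) := by
          exact_mod_cast congrArg (fun x : ℤ => (x : ℂ)) ht
        rw [hq] at h4
        linear_combination h3 - h2 + h4
    obtain ⟨γ, hγZ, hγeq⟩ := hγ
    -- uniqueness of the residue of s
    obtain ⟨x, -, hun⟩ := hR.2 (s : ℂ) (hR.1 s.2)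
    have h5 : (s : ℂ) = x := hun _ ⟨s.2, 0, ⟨0, by simp⟩, by ring⟩
    have h6 : (r : ℂ) = x := hun _ ⟨r.2, γ, hγZ, by linear_combination hγeq⟩
    exact Subtype.ext (h6.trans h5.symm)
  exact Set.finite_coe_iff.mp (Finite.of_injective f hinj)

end Aux

lemma mem_or_inv_mem_localization {R K : Type*} [CommRing R] [IsDedekindDomain R] [Field K]
    [Algebra R K] [IsFractionRing R K] (v : HeightOneSpectrum R) (x : K) :
    x ∈ Localization.subalgebra.ofField K v.asIdeal.primeCompl
        v.asIdeal.primeCompl_le_nonZeroDivisors ∨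
    x⁻¹ ∈ Localization.subalgebra.ofField K v.asIdeal.primeCompl
        v.asIdeal.primeCompl_le_nonZeroDivisors := by
  set A := Localization.subalgebra.ofField K v.asIdeal.primeCompl
    v.asIdeal.primeCompl_le_nonZeroDivisors with hA
  haveI := v.isPrime
  haveI : IsDiscreteValuationRing A :=
    IsLocalization.AtPrime.isDiscreteValuationRing_of_dedekind_domain R v.ne_bot A
  have hAint : ∀ y : K, IsLocalization.IsInteger A y ↔ y ∈ A := by
    intro y
    constructor
    · rintro ⟨z, rfl⟩
      exact z.2
    · intro hy
      exact ⟨⟨y, hy⟩, rfl⟩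
  rcases ValuationRing.isInteger_or_isInteger A x with h | h
  · exact Or.inl ((hAint x).mp h)
  · exact Or.inr ((hAint x⁻¹).mp h)


set_option maxHeartbeats 1000000 in
lemma orbit_eventually_periodic (α : ℂ) (hα : IsAlgebraic ℚ α)
    (hexp : ∀ z : ℂ, aeval z (minpoly ℚ α) = 0 → 1 < ‖z‖)
    (R : Set ℂ) (hR : IsCRS α R) (J : ℂ → ℂ) (hJ : IsJmap α R J)
    (hRfin : R.Finite) (hα0 : α ≠ 0)
    (β : ℂ) (hβ : β ∈ Zadj α) :
    ∃ a b : ℕ, a < b ∧ J^[a] β = J^[b] β := by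
  -- the number field K = ℚ(α)
  set K := ℚ⟮α⟯ with hK
  haveI : FiniteDimensional ℚ K := IntermediateField.adjoin.finiteDimensional hα.isIntegral
  haveI : NumberField K := ⟨⟩
  set α' : K := IntermediateField.AdjoinSimple.gen ℚ α with hα'
  have hcoeα : (α' : ℂ) = α := rfl
  have hα'0 : α' ≠ 0 := by
    intro h
    apply hα0
    rw [← hcoeα, h]; rfl
  -- lifting elements of Zadj α to K
  have lift : ∀ z ∈ Zadj α, ∃ y : K, (∃ P : ℤ[X], aeval α' P = y) ∧ (y : ℂ) = z := by
    rintro z ⟨P, hP⟩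
    refine ⟨aeval α' P, ⟨P, rfl⟩, ?_⟩
    have h1 : (algebraMap K ℂ) (aeval α' P) = aeval ((algebraMap K ℂ) α') P :=
      (Polynomial.aeval_algHom_apply (algebraMap K ℂ).toIntAlgHom α' P).symm
    simpa [hcoeα, hP] using h1
  -- the orbit in Zadj α
  have iterZ : ∀ n : ℕ, J^[n] β ∈ Zadj α := by
    intro n
    induction n with
    | zero => exact hβ
    | succ n ih => rw [Function.iterate_succ_apply']; exact (hJ _ ih).1
  -- the orbit lifted to K
  choose w hw1 hw2 using fun n => lift (J^[n] β) (iterZ n)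
  -- the residues
  have hres : ∀ n : ℕ, ∃ r ∈ R, J^[n] β = r + α * J^[n+1] β := by
    intro n
    obtain ⟨-, r, hrR, hr⟩ := hJ _ (iterZ n)
    exact ⟨r, hrR, by rw [Function.iterate_succ_apply']; exact hr⟩
  choose r hr1 hr2 using hres
  -- lift the residues
  choose ρ hρ1 hρ2 using fun n => lift (r n) (hR.1 (hr1 n))
  -- the basic recurrence in K
  have key : ∀ n, w n = ρ n + α' * w (n + 1) := by
    intro n
    apply Subtype.coe_injective
    push_cast
    rw [hw2, hρ2, hw2, hcoeα]
    exact hr2 n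
  have key2 : ∀ n, w (n + 1) = (w n - ρ n) * α'⁻¹ := by
    intro n
    rw [key n]
    field_simp
    ring
  -- lifted residue set
  set R' : Set K := ((↑) : K → ℂ) ⁻¹' R with hR'
  have hR'fin : R'.Finite := hRfin.preimage (Set.injOn_of_injective Subtype.coe_injective)
  have hρR' : ∀ n, ρ n ∈ R' := by
    intro n
    simp only [hR', Set.mem_preimage]
    rw [hρ2]
    exact hr1 n
  -- every embedding expands at α'
  have hminpoly : minpoly ℚ α' = minpoly ℚ α := by
    rw [← minpoly.algebraMap_eq (algebraMap K ℂ).injective α']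
    rfl
  have hφα : ∀ φ : K →+* ℂ, 1 < ‖φ α'‖ := by
    intro φ
    apply hexp
    rw [← hminpoly]
    have h1 : aeval (φ.toRatAlgHom α') (minpoly ℚ α') = φ.toRatAlgHom (aeval α' (minpoly ℚ α')) :=
      Polynomial.aeval_algHom_apply φ.toRatAlgHom α' (minpoly ℚ α')
    rw [minpoly.aeval, map_zero] at h1
    exact h1
  -- uniform bound on embeddings of residues
  have hMex : ∃ M : ℝ, 0 ≤ M ∧ ∀ (n : ℕ) (φ : K →+* ℂ), ‖φ (ρ n)‖ ≤ M := by
    have hfin2 : (Set.image2 (fun (φ : K →+* ℂ) (y : K) => ‖φ y‖) Set.univ R').Finite :=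
      Set.Finite.image2 _ (Set.finite_univ) hR'fin
    obtain ⟨M0, hM0⟩ := hfin2.bddAbove
    refine ⟨max M0 0, le_max_right _ _, fun n φ => ?_⟩
    exact le_trans (hM0 (Set.mem_image2_of_mem (Set.mem_univ φ) (hρR' n))) (le_max_left _ _)
  obtain ⟨M, hM0, hM⟩ := hMex
  -- per-embedding archimedean bound
  have arch : ∀ (φ : K →+* ℂ) (n : ℕ),
      ‖φ (w n)‖ ≤ max (‖φ (w 0)‖) (M / (‖φ α'‖ - 1)) := by
    intro φ n
    set m : ℝ := ‖φ α'‖ with hm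
    have hm1 : 1 < m := by rw [hm]; exact hφα φ
    set B : ℝ := max (‖φ (w 0)‖) (M / (m - 1)) with hB
    have hBM : M ≤ (m - 1) * B := by
      have : M / (m - 1) ≤ B := le_max_right _ _
      rw [div_le_iff₀ (by linarith)] at this
      linarith [this]
    induction n with
    | zero => exact le_max_left _ _
    | succ n ih =>
      have hrec : φ (w n) = φ (ρ n) + φ α' * φ (w (n + 1)) := by
        rw [key n, map_add, map_mul]
      have h1 : ‖φ (w (n + 1))‖ * m = ‖φ (w n) - φ (ρ n)‖ := by
        rw [hrec]
        rw [← norm_mul]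
        congr 1
        ring
      have h2 : ‖φ (w n) - φ (ρ n)‖ ≤ B + M :=
        le_trans (norm_sub_le _ _) (add_le_add ih (hM n φ))
      have h3 : ‖φ (w (n + 1))‖ * m ≤ m * B := by
        rw [h1]
        calc ‖φ (w n) - φ (ρ n)‖ ≤ B + M := h2
        _ ≤ B + (m - 1) * B := by linarith
        _ = m * B := by ring
      have hmpos : (0:ℝ) < m := by linarith
      nlinarith [h3, hmpos]
  -- integrality: common denominator for w 0 and the residues
  classical
  set S : Finset K := insert (w 0) hR'fin.toFinset with hS
  obtain ⟨N, hN⟩ := IsLocalization.exist_integer_multiples (nonZeroDivisors (𝓞 K)) S id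
  have hNint : ∀ x ∈ S, ∃ y : 𝓞 K, algebraMap (𝓞 K) K y = algebraMap (𝓞 K) K (N : 𝓞 K) * x := by
    intro x hx
    obtain ⟨y, hy⟩ := hN x hx
    exact ⟨y, by rw [hy]; simp [Algebra.smul_def]⟩
  -- localization subalgebras at the height one primes
  let A : HeightOneSpectrum (𝓞 K) → Subalgebra (𝓞 K) K := fun v =>
    Localization.subalgebra.ofField K v.asIdeal.primeCompl
      v.asIdeal.primeCompl_le_nonZeroDivisors
  have hAint : ∀ (v : HeightOneSpectrum (𝓞 K)) (x : K),
      IsLocalization.IsInteger (A v) x ↔ x ∈ A v := by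
    intro v x
    constructor
    · rintro ⟨y, rfl⟩
      exact y.2
    · intro hx
      exact ⟨⟨x, hx⟩, rfl⟩
  have hAor : ∀ (v : HeightOneSpectrum (𝓞 K)) (x : K), x ∈ A v ∨ x⁻¹ ∈ A v :=
    fun v x => mem_or_inv_mem_localization v x
  -- Zadj elements are in A v whenever α' is
  have hadj : ∀ (v : HeightOneSpectrum (𝓞 K)), α' ∈ A v → ∀ (P : ℤ[X]), aeval α' P ∈ A v := by
    intro v hαv P
    rw [Polynomial.aeval_eq_sum_range]
    apply Subalgebra.sum_mem
    intro i _
    exact Subalgebra.zsmul_mem _ (Subalgebra.pow_mem _ hαv i) _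
  -- main induction : N * w n is everywhere locally integral
  have hloc : ∀ (n : ℕ) (v : HeightOneSpectrum (𝓞 K)),
      algebraMap (𝓞 K) K (N : 𝓞 K) * w n ∈ A v := by
    intro n
    induction n with
    | zero =>
      intro v
      obtain ⟨y, hy⟩ := hNint (w 0) (by simp [hS])
      rw [← hy]
      exact Subalgebra.algebraMap_mem _ y
    | succ n ih =>
      intro v
      by_cases hmem : (α' : K)⁻¹ ∈ A v
      · have hρv : algebraMap (𝓞 K) K (N : 𝓞 K) * ρ n ∈ A v := by
          obtain ⟨y, hy⟩ := hNint (ρ n) (by simp [hS, hρR' n])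
          rw [← hy]
          exact Subalgebra.algebraMap_mem _ y
        have heq : algebraMap (𝓞 K) K (N : 𝓞 K) * w (n + 1) =
            (algebraMap (𝓞 K) K (N : 𝓞 K) * w n - algebraMap (𝓞 K) K (N : 𝓞 K) * ρ n) * α'⁻¹ := by
          rw [key2 n]; ring
        rw [heq]
        exact mul_mem (sub_mem (ih v) hρv) hmem
      · have hαv : α' ∈ A v := (hAor v α').resolve_right hmem
        obtain ⟨P, hP⟩ := hw1 (n + 1)
        have : w (n + 1) ∈ A v := hP ▸ hadj v hαv P
        exact mul_mem (Subalgebra.algebraMap_mem _ _) this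
  -- hence N * w n is integral over ℤ
  have hint : ∀ n : ℕ, IsIntegral ℤ (algebraMap (𝓞 K) K (N : 𝓞 K) * w n) := by
    intro n
    have hbot : algebraMap (𝓞 K) K (N : 𝓞 K) * w n ∈ (⊥ : Subalgebra (𝓞 K) K) := by
      rw [← IsDedekindDomain.HeightOneSpectrum.iInf_localization_eq_bot (𝓞 K)]
      rw [Algebra.mem_iInf]
      exact fun v => hloc n v
    obtain ⟨y, hy⟩ := Algebra.mem_bot.mp hbot
    rw [← hy]
    exact NumberField.RingOfIntegers.isIntegral_coe y
  -- uniform archimedean bound over all embeddings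
  obtain ⟨B, hB⟩ : ∃ B : ℝ, ∀ (φ : K →+* ℂ) (n : ℕ), ‖φ (w n)‖ ≤ B := by
    obtain ⟨B, hBB⟩ :=
      (Set.finite_range (fun φ : K →+* ℂ => max (‖φ (w 0)‖) (M / (‖φ α'‖ - 1)))).bddAbove
    exact ⟨B, fun φ n => le_trans (arch φ n) (hBB (Set.mem_range_self φ))⟩
  obtain ⟨C, hC⟩ : ∃ C : ℝ, ∀ φ : K →+* ℂ, ‖φ (algebraMap (𝓞 K) K (N : 𝓞 K))‖ ≤ C := by
    obtain ⟨C, hCC⟩ :=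
      (Set.finite_range (fun φ : K →+* ℂ => ‖φ (algebraMap (𝓞 K) K (N : 𝓞 K))‖)).bddAbove
    exact ⟨C, fun φ => hCC (Set.mem_range_self φ)⟩
  set T := {x : K | IsIntegral ℤ x ∧ ∀ φ : K →+* ℂ, ‖φ x‖ ≤ C * B} with hT
  have hTfin : T.Finite := NumberField.Embeddings.finite_of_norm_le K ℂ (C * B)
  have hmemT : ∀ n : ℕ, algebraMap (𝓞 K) K (N : 𝓞 K) * w n ∈ T := by
    intro n
    refine ⟨hint n, fun φ => ?_⟩
    rw [map_mul, norm_mul]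
    exact mul_le_mul (hC φ) (hB φ n) (norm_nonneg _) (le_trans (norm_nonneg _) (hC φ))
  haveI : Finite T := hTfin.to_subtype
  obtain ⟨a, b, hne, heq⟩ := Finite.exists_ne_map_eq_of_infinite
    (fun n : ℕ => (⟨algebraMap (𝓞 K) K (N : 𝓞 K) * w n, hmemT n⟩ : T))
  have hNne : algebraMap (𝓞 K) K (N : 𝓞 K) ≠ 0 := by
    intro h
    have h0 : (N : 𝓞 K) = 0 := IsFractionRing.injective (𝓞 K) K (by rw [h, map_zero])
    exact nonZeroDivisors.ne_zero N.2 h0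
  have heq2 : w a = w b := by
    have := congrArg Subtype.val heq
    simp only at this
    exact mul_left_cancel₀ hNne this
  have heq3 : J^[a] β = J^[b] β := by
    rw [← hw2 a, ← hw2 b, heq2]
  rcases hne.lt_or_gt with hab | hab
  · exact ⟨a, b, hab, heq3⟩
  · exact ⟨b, a, hab, heq3.symm⟩


/-- Corollary 2 (iv): for an expanding algebraic number `α`, a CRS `R` and the associated
map `J`, `(α, R)` is a number system (i.e. `ℤ[α] = R[α]` and `0 ∈ R`) iff `℘ = {0}`. -/
theorem number_system_iff_perSet_eq_zero (α : ℂ) (hα : IsAlgebraic ℚ α)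
    (hexp : ∀ z : ℂ, aeval z (minpoly ℚ α) = 0 → 1 < ‖z‖)
    (R : Set ℂ) (hR : IsCRS α R) (J : ℂ → ℂ) (hJ : IsJmap α R J) :
    (repSet α R = Zadj α ∧ (0 : ℂ) ∈ R) ↔ perSet α J = {0} := by
  have hαabs : 1 < ‖α‖ := hexp α (minpoly.aeval ℚ α)
  have hα0 : α ≠ 0 := by
    intro h; rw [h] at hαabs; simp at hαabs; linarith
  constructor
  · rintro ⟨hrep, h0R⟩
    have hJ0 : J 0 = 0 := Jstep hR hJ hα0 Zadj_zero h0R Zadj_zero (by ring)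
    ext x
    simp only [Set.mem_singleton_iff]
    constructor
    · rintro ⟨hxZ, p, hp1, hpx⟩
      rw [← hrep] at hxZ
      obtain ⟨n, f, hf, hsum⟩ := hxZ
      set F : ℕ → ℂ := fun j => if j ≤ n then f j else 0 with hF
      have hFR : ∀ j, F j ∈ R := by
        intro j
        by_cases h : j ≤ n
        · simpa [hF, h] using hf j h
        · simpa [hF, h] using h0R
      have hF0 : ∀ j, n < j → F j = 0 := by
        intro j hj; simp [hF, Nat.not_le.mpr hj]
      have hsum' : x = ∑ j ∈ Finset.range (n + 1), F j * α ^ j := by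
        rw [hsum]
        apply Finset.sum_congr rfl
        intro j hj
        rw [Finset.mem_range] at hj
        simp [hF, Nat.lt_succ_iff.mp hj]
      -- strip all digits
      have strip : ∀ (m : ℕ) (g : ℕ → ℂ) (β : ℂ), (∀ j, g j ∈ R) → (∀ j, m < j → g j = 0) →
          β = ∑ j ∈ Finset.range (m + 1), g j * α ^ j → J^[m + 1] β = 0 := by
        intro m
        induction m with
        | zero =>
          intro g β hg hg0 hβ
          have : J β = 0 := by
            have := Jdigit hR hJ hα0 0 g β hg hβ
            simpa using this
          simpa using this
        | succ m ih =>
          intro g β hg hg0 hβ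
          have hJβ : J β = ∑ j ∈ Finset.range (m + 1), g (j + 1) * α ^ j :=
            Jdigit hR hJ hα0 (m + 1) g β hg hβ
          have : J^[m + 1] (J β) = 0 := by
            apply ih (fun j => g (j + 1)) (J β) (fun j => hg (j + 1))
            · intro j hj; exact hg0 (j + 1) (by omega)
            · exact hJβ
          rw [Function.iterate_succ_apply]
          exact this
      have hstrip : J^[n + 1] x = 0 := strip n F x hFR hF0 hsum'
      -- x is periodic with period p; iterate enough
      have hiter : ∀ k : ℕ, J^[k * p] x = x := by
        intro k
        induction k with
        | zero => simp
        | succ k ih =>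
          have : (k + 1) * p = k * p + p := by ring
          rw [this, Function.iterate_add_apply, hpx, ih]
      have hge : n + 1 ≤ (n + 1) * p := Nat.le_mul_of_pos_right _ (by omega)
      have : x = J^[(n + 1) * p] x := (hiter (n + 1)).symm
      rw [this, ← Nat.sub_add_cancel hge, Function.iterate_add_apply, hstrip,
        Function.iterate_fixed hJ0]
    · rintro rfl
      exact ⟨Zadj_zero, 1, le_refl 1, by simp [hJ0]⟩
  · intro hper
    -- first: J 0 = 0 and 0 ∈ R
    have h0per : (0 : ℂ) ∈ perSet α J := by rw [hper]; rfl
    obtain ⟨-, p, hp1, hp0⟩ := h0per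
    have hJ0Z : J 0 ∈ Zadj α := (hJ 0 Zadj_zero).1
    have hJ0per : J 0 ∈ perSet α J := by
      refine ⟨hJ0Z, p, hp1, ?_⟩
      rw [← Function.iterate_succ_apply, Function.iterate_succ_apply', hp0]
    have hJ0 : J 0 = 0 := by rw [hper] at hJ0per; exact hJ0per
    have h0R : (0 : ℂ) ∈ R := by
      obtain ⟨-, r, hrR, hr⟩ := hJ 0 Zadj_zero
      rw [hJ0, mul_zero, add_zero] at hr
      rw [hr]; exact hrR
    -- the hard part : every element of Zadj α reaches 0 under J
    have reach : ∀ β ∈ Zadj α, ∃ n : ℕ, J^[n] β = 0 := by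
      intro β hβZ
      obtain ⟨a, b, hab, heq⟩ := orbit_eventually_periodic α hα hexp R hR J hJ
        (R_finite hα hα0 hR) hα0 β hβZ
      have iterZ : ∀ n : ℕ, J^[n] β ∈ Zadj α := by
        intro n
        induction n with
        | zero => exact hβZ
        | succ n ih => rw [Function.iterate_succ_apply']; exact (hJ _ ih).1
      have hxper : J^[a] β ∈ perSet α J := by
        refine ⟨iterZ a, b - a, by omega, ?_⟩
        rw [← Function.iterate_add_apply]
        have hba : b - a + a = b := by omega
        rw [hba]
        exact heq.symm
      rw [hper] at hxper
      exact ⟨a, hxper⟩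
    -- build representations
    have buildRep : ∀ (n : ℕ) (β : ℂ), β ∈ Zadj α → J^[n] β = 0 → β ∈ repSet α R := by
      intro n
      induction n with
      | zero =>
        intro β _ hβ0
        simp at hβ0
        exact ⟨0, fun _ => 0, fun _ _ => h0R, by simp [hβ0]⟩
      | succ n ih =>
        intro β hβZ hβ0
        rw [Function.iterate_succ_apply] at hβ0
        obtain ⟨hJβZ, r, hrR, hr⟩ := hJ β hβZ
        obtain ⟨m, f, hf, hsum⟩ := ih (J β) hJβZ hβ0
        refine ⟨m + 1, fun j => if j = 0 then r else f (j - 1), ?_, ?_⟩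
        · intro j hj
          by_cases h : j = 0
          · simpa [h] using hrR
          · simp only [if_neg h]
            exact hf (j - 1) (by omega)
        · have hs2 : ∀ i ∈ Finset.range (m + 1),
              (if i + 1 = 0 then r else f (i + 1 - 1)) * α ^ (i + 1) = α * (f i * α ^ i) := by
            intro i _
            rw [if_neg (Nat.succ_ne_zero i), Nat.add_sub_cancel]
            ring
          rw [Finset.sum_range_succ' (fun j => (if j = 0 then r else f (j - 1)) * α ^ j) (m + 1),
            Finset.sum_congr rfl hs2, ← Finset.mul_sum, ← hsum, if_pos rfl, pow_zero, mul_one,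
            add_comm]
          exact hr
    constructor
    · apply Set.eq_of_subset_of_subset
      · rintro z ⟨n, f, hf, hsum⟩
        rw [hsum]
        exact Zadj_sum (fun j hj => Zadj_mul (hR.1 (hf j (Nat.lt_succ_iff.mp (Finset.mem_range.mp hj)))) (Zadj_pow j))
      · intro β hβZ
        obtain ⟨n, hn⟩ := reach β hβZ
        exact buildRep n β hβZ hn
    · exact h0R
end

section
/- Let H be a positive integer and let α be an algebraic number none of whose conjugates (the complex roots of its minimal polynomial, including α itself) has modulus 1. Then the language over the alphabet {d ∈ ℤ : |d| ≤ H} consisting of all words d_m … d_0 such that Σ_{i=0}^{m} d_i α^i = 0 is a regular language, i.e., it is recognized by a finite automaton. -/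
open Polynomial

/-- The complex number represented by the word `d_m … d_0` (read left to right)
in base `α`: `Σ_{i=0}^{m} d_i α^i`. -/
def wordValue (α : ℂ) {H : ℕ} (w : List {d : ℤ // d.natAbs ≤ H}) : ℂ :=
  w.foldl (fun acc d => α * acc + (d.1 : ℂ)) 0


namespace ZeroRep

variable (α : ℂ) {H : ℕ}

abbrev A (H : ℕ) := {d : ℤ // d.natAbs ≤ H}

def valFrom (q : ℂ) (w : List (A H)) : ℂ :=
  w.foldl (fun acc d => α * acc + (d.1 : ℂ)) q

@[simp] lemma valFrom_nil (q : ℂ) : valFrom α q ([] : List (A H)) = q := rfl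

lemma valFrom_append (q : ℂ) (u v : List (A H)) :
    valFrom α q (u ++ v) = valFrom α (valFrom α q u) v :=
  List.foldl_append

@[simp] lemma valFrom_concat (q : ℂ) (u : List (A H)) (a : A H) :
    valFrom α q (u ++ [a]) = α * valFrom α q u + (a.1 : ℂ) := by
  rw [valFrom_append]; rfl

lemma valFrom_eq (q : ℂ) (w : List (A H)) :
    valFrom α q w = α ^ w.length * q + valFrom α 0 w := by
  induction w using List.reverseRecOn with
  | nil => simp
  | append_singleton u a ih =>
      simp only [valFrom_concat, ih, List.length_append, List.length_singleton]
      ring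

lemma exists_rep (u : List (A H)) :
    ∃ c : ℕ → ℤ, (∀ i, (c i).natAbs ≤ H) ∧
      valFrom α 0 u = ∑ i ∈ Finset.range u.length, (c i : ℂ) * α ^ i := by
  induction u using List.reverseRecOn with
  | nil => exact ⟨fun _ => 0, fun _ => Nat.zero_le _, by simp⟩
  | append_singleton u a ih =>
      obtain ⟨c, hc, hval⟩ := ih
      refine ⟨fun i => if i = 0 then a.1 else c (i - 1), fun i => ?_, ?_⟩
      · by_cases h : i = 0 <;> simp [h, a.2, hc]
      · simp only [valFrom_concat, hval, List.length_append, List.length_singleton,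
          Finset.mul_sum, Finset.sum_range_succ']
        simp [Finset.mul_sum, pow_succ]
        ring_nf

variable {α}

lemma geom_aux {r : ℝ} (h0 : 0 ≤ r) (h1 : r < 1) (n : ℕ) :
    ∑ i ∈ Finset.range n, r ^ i ≤ (1 - r)⁻¹ :=
  (Summable.sum_le_tsum (Finset.range n) (fun i _ => pow_nonneg h0 i)
    (summable_geometric_of_lt_one h0 h1)).trans_eq (tsum_geometric_of_lt_one h0 h1)

lemma corep_aux (hα0 : α ≠ 0) {q : ℂ} {k : ℕ} {c : ℕ → ℤ}
    (h : α ^ k * q + ∑ i ∈ Finset.range k, (c i : ℂ) * α ^ i = 0) :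
    q = -∑ j ∈ Finset.range k, ((c (k - 1 - j) : ℂ)) * (α⁻¹) ^ (j + 1) := by
  have hk : α ^ k ≠ 0 := pow_ne_zero _ hα0
  apply mul_left_cancel₀ hk
  have key : ∀ j ∈ Finset.range k, α ^ k * ((c (k - 1 - j) : ℂ) * (α⁻¹) ^ (j + 1))
      = (c (k - 1 - j) : ℂ) * α ^ (k - 1 - j) := by
    intro j hj
    rw [Finset.mem_range] at hj
    have hsplit : α ^ k = α ^ (k - 1 - j) * α ^ (j + 1) := by
      rw [← pow_add]; congr 1; omega
    rw [hsplit, inv_pow]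
    field_simp
  symm
  calc α ^ k * -∑ j ∈ Finset.range k, ((c (k - 1 - j) : ℂ)) * (α⁻¹) ^ (j + 1)
      = -∑ j ∈ Finset.range k, α ^ k * (((c (k - 1 - j) : ℂ)) * (α⁻¹) ^ (j + 1)) := by
        rw [mul_neg, Finset.mul_sum]
    _ = -∑ j ∈ Finset.range k, (c (k - 1 - j) : ℂ) * α ^ (k - 1 - j) := by
        rw [Finset.sum_congr rfl key]
    _ = -∑ i ∈ Finset.range k, (c i : ℂ) * α ^ i := by
        rw [Finset.sum_range_reflect (fun i => (c i : ℂ) * α ^ i) k]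
    _ = α ^ k * q := by linear_combination -h

/-- completable values have a representation in negative powers of α -/
lemma exists_corep (hα0 : α ≠ 0) {q : ℂ} (h : ∃ w : List (A H), valFrom α q w = 0) :
    ∃ (k : ℕ) (c : ℕ → ℤ), (∀ i, (c i).natAbs ≤ H) ∧
      q = -∑ j ∈ Finset.range k, (c j : ℂ) * (α⁻¹) ^ (j + 1) := by
  obtain ⟨w, hw⟩ := h
  rw [valFrom_eq] at hw
  obtain ⟨c, hc, hval⟩ := exists_rep α w
  rw [hval] at hw
  exact ⟨w.length, fun j => c (w.length - 1 - j), fun j => hc _, corep_aux hα0 hw⟩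

set_option synthInstance.maxHeartbeats 1000000 in
set_option maxHeartbeats 1000000 in
open IntermediateField in
lemma S_finite (hα : IsAlgebraic ℚ α)
    (hconj : ∀ z : ℂ, aeval z (minpoly ℚ α) = 0 → ‖z‖ ≠ 1) :
    {q : ℂ | (∃ u : List (A H), valFrom α 0 u = q) ∧
       ∃ w : List (A H), valFrom α q w = 0}.Finite := by
  by_cases hα0 : α = 0
  · -- for α = 0 all reachable values are integers of absolute value ≤ H, or 0
    apply Set.Finite.subset (((Set.finite_Icc (-(H:ℤ)) H).image (fun n : ℤ => (n : ℂ))).union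
      (Set.finite_singleton 0))
    rintro q ⟨⟨u, hu⟩, -⟩
    obtain ⟨c, hc, hval⟩ := exists_rep α u
    rw [hu] at hval
    rcases Nat.eq_zero_or_pos u.length with h0 | hpos
    · right; simp [hval, h0]
    · left
      refine ⟨c 0, ?_, ?_⟩
      · have := hc 0; simp only [Set.mem_Icc]; omega
      · rw [hval, hα0]
        rw [Finset.sum_eq_single_of_mem 0 (Finset.mem_range.mpr hpos)]
        · simp
        · intro i _ hi
          simp [zero_pow hi]
  -- main case: α ≠ 0
  haveI : FiniteDimensional ℚ ℚ⟮α⟯ := IntermediateField.adjoin.finiteDimensional hα.isIntegral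
  haveI : NumberField ℚ⟮α⟯ := {}
  set K := ℚ⟮α⟯
  set α' : K := AdjoinSimple.gen ℚ α with hα'def
  have hmap : algebraMap K ℂ α' = α := AdjoinSimple.algebraMap_gen ℚ α
  have hα'0 : α' ≠ 0 := by
    intro h
    exact hα0 (by rw [← hmap, h, map_zero])
  have hinj : Function.Injective (algebraMap K ℂ) := (algebraMap K ℂ).injective
  have hroot : ∀ φ : K →+* ℂ, ‖φ α'‖ ≠ 1 := by
    intro φ
    have h1 : minpoly ℚ α' = minpoly ℚ α := by
      conv_rhs => rw [← hmap]
      exact (minpoly.algebraMap_eq hinj α').symm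
    have h2 : aeval (φ α') (minpoly ℚ α) = 0 := by
      rw [← h1]
      exact (aeval_algHom_apply φ.toRatAlgHom α' (minpoly ℚ α')).trans
        (by rw [minpoly.aeval, map_zero])
    intro hnorm
    exact hconj (φ α') h2 (hnorm)
  haveI : Nonempty (K →+* ℂ) := ⟨algebraMap K ℂ⟩
  set B : ℝ := Finset.univ.sup' Finset.univ_nonempty
    (fun φ : K →+* ℂ => max ((H : ℝ) * (1 - ‖φ α'‖)⁻¹) ((H : ℝ) * (‖φ α'‖ - 1)⁻¹)) with hBdef
  apply Set.Finite.subset (((NumberField.Embeddings.finite_of_norm_le K ℂ B)).image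
    (algebraMap K ℂ))
  rintro q ⟨⟨u, hu⟩, hcomp⟩
  obtain ⟨c, hc, hval⟩ := exists_rep α u
  rw [hu] at hval
  obtain ⟨k, c', hc', hq'⟩ := exists_corep hα0 hcomp
  set m := u.length with hm
  set x : K := ∑ i ∈ Finset.range m, (c i : K) * α' ^ i with hxdef
  have hxq : algebraMap K ℂ x = q := by
    rw [hxdef, map_sum]
    simp only [map_mul, map_intCast, map_pow, hmap]
    exact hval.symm
  have hx' : x = -∑ j ∈ Finset.range k, (c' j : K) * (α'⁻¹) ^ (j + 1) := by
    apply hinj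
    rw [hxq, map_neg, map_sum]
    simp only [map_mul, map_intCast, map_pow, map_inv₀, hmap]
    exact hq'
  refine ⟨x, ⟨?_, ?_⟩, hxq⟩
  · -- integrality
    set N : Submodule ℤ K :=
      Submodule.span ℤ ((fun t : ℤ => α' ^ t) '' (Set.Icc (-(k : ℤ)) (m : ℤ))) with hNdef
    have hmem : ∀ t : ℤ, -(k : ℤ) ≤ t → t ≤ (m : ℤ) → α' ^ t ∈ N :=
      fun t h1 h2 => Submodule.subset_span ⟨t, ⟨h1, h2⟩, rfl⟩
    have h1N : (1 : K) ∈ N := by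
      have := hmem 0 (by simp) (by simp)
      simpa using this
    have hNbot : N ≠ ⊥ := by
      intro h
      rw [h, Submodule.mem_bot] at h1N
      exact one_ne_zero h1N
    have hNfg : N.FG := Submodule.fg_span ((Set.finite_Icc _ _).image _)
    have hgen : ∀ t : ℤ, -(k : ℤ) ≤ t → t ≤ (m : ℤ) → x * α' ^ t ∈ N := by
      intro t ht1 ht2
      rcases le_or_gt t 0 with htle | htpos
      · have hrw : x * α' ^ t = ∑ i ∈ Finset.range m, c i • α' ^ ((i : ℤ) + t) := by
          rw [hxdef, Finset.sum_mul]
          refine Finset.sum_congr rfl fun i _ => ?_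
          rw [zsmul_eq_mul, zpow_add₀ hα'0, zpow_natCast]
          push_cast
          ring
        rw [hrw]
        refine Submodule.sum_mem _ fun i hi => Submodule.smul_mem _ _ (hmem _ ?_ ?_)
        · have : (0 : ℤ) ≤ i := Int.natCast_nonneg i
          omega
        · have : (i : ℤ) < m := by exact_mod_cast Finset.mem_range.mp hi
          omega
      · have hrw : x * α' ^ t = -∑ j ∈ Finset.range k, c' j • α' ^ (t - (j + 1 : ℕ)) := by
          rw [hx', neg_mul, Finset.sum_mul]
          congr 1
          refine Finset.sum_congr rfl fun j _ => ?_
          rw [zsmul_eq_mul, inv_pow, ← zpow_natCast α' (j + 1), ← zpow_neg,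
            mul_assoc, ← zpow_add₀ hα'0]
          congr 2
          omega
        rw [hrw]
        refine Submodule.neg_mem _ (Submodule.sum_mem _ fun j hj =>
          Submodule.smul_mem _ _ (hmem _ ?_ ?_))
        · have : (j : ℤ) + 1 ≤ k := by exact_mod_cast Finset.mem_range.mp hj
          push_cast
          omega
        · push_cast
          omega
    refine isIntegral_of_smul_mem_submodule N hNbot hNfg x ?_
    intro n hn
    induction hn using Submodule.span_induction with
    | mem y hy =>
        obtain ⟨t, ht, rfl⟩ := hy
        rw [smul_eq_mul]
        exact hgen t ht.1 ht.2
    | zero => simpa using Submodule.zero_mem N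
    | add y z hy hz hy' hz' => rw [smul_add]; exact Submodule.add_mem _ hy' hz'
    | smul a y hy hy' => rw [smul_comm]; exact Submodule.smul_mem _ _ hy'
  · -- bounds at all embeddings
    intro φ
    have hd : ∀ i : ℕ, ‖((c i : ℂ))‖ ≤ (H : ℝ) := by
      intro i
      rw [Complex.norm_intCast]
      have := hc i
      have h2 : |c i| ≤ (H : ℤ) := by
        rw [Int.abs_eq_natAbs]; exact_mod_cast this
      exact_mod_cast h2
    have hd' : ∀ i : ℕ, ‖((c' i : ℂ))‖ ≤ (H : ℝ) := by
      intro i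
      rw [Complex.norm_intCast]
      have := hc' i
      have h2 : |c' i| ≤ (H : ℤ) := by
        rw [Int.abs_eq_natAbs]; exact_mod_cast this
      exact_mod_cast h2
    have hβn : ‖φ α'‖ ≠ 1 := hroot φ
    have hB : max ((H : ℝ) * (1 - ‖φ α'‖)⁻¹) ((H : ℝ) * (‖φ α'‖ - 1)⁻¹) ≤ B :=
      Finset.le_sup' (fun ψ : K →+* ℂ =>
        max ((H : ℝ) * (1 - ‖ψ α'‖)⁻¹) ((H : ℝ) * (‖ψ α'‖ - 1)⁻¹)) (Finset.mem_univ φ)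
    rcases lt_or_gt_of_ne hβn with hlt | hgt
    · -- |β| < 1 : use the prefix representation
      have hφx : φ x = ∑ i ∈ Finset.range m, (c i : ℂ) * φ α' ^ i := by
        rw [hxdef, map_sum]
        simp only [map_mul, map_intCast, map_pow]
      calc ‖φ x‖ ≤ ∑ i ∈ Finset.range m, ‖(c i : ℂ) * φ α' ^ i‖ := by
            rw [hφx]; exact norm_sum_le _ _
        _ ≤ ∑ i ∈ Finset.range m, (H : ℝ) * ‖φ α'‖ ^ i := by
            refine Finset.sum_le_sum fun i _ => ?_
            rw [norm_mul, norm_pow]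
            exact mul_le_mul_of_nonneg_right (hd i) (pow_nonneg (norm_nonneg _) _)
        _ = (H : ℝ) * ∑ i ∈ Finset.range m, ‖φ α'‖ ^ i := by rw [Finset.mul_sum]
        _ ≤ (H : ℝ) * (1 - ‖φ α'‖)⁻¹ := by
            refine mul_le_mul_of_nonneg_left ?_ (Nat.cast_nonneg H)
            exact geom_aux (norm_nonneg _) hlt m
        _ ≤ B := le_trans (le_max_left _ _) hB
    · -- |β| > 1 : use the suffix representation
      have hβ0 : φ α' ≠ 0 := by
        intro h
        rw [h, norm_zero] at hgt
        linarith
      have hφx : φ x = -∑ j ∈ Finset.range k, (c' j : ℂ) * ((φ α')⁻¹) ^ (j + 1) := by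
        rw [hx', map_neg, map_sum]
        simp only [map_mul, map_intCast, map_pow, map_inv₀]
      have hs1 : ‖(φ α')⁻¹‖ < 1 := by
        rw [norm_inv]
        rw [inv_lt_one_iff₀]
        right; exact hgt
      have hs0 : 0 ≤ ‖(φ α')⁻¹‖ := norm_nonneg _
      calc ‖φ x‖ = ‖∑ j ∈ Finset.range k, (c' j : ℂ) * ((φ α')⁻¹) ^ (j + 1)‖ := by
            rw [hφx, norm_neg]
        _ ≤ ∑ j ∈ Finset.range k, (H : ℝ) * (‖(φ α')⁻¹‖ ^ j * ‖(φ α')⁻¹‖) := by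
            refine le_trans (norm_sum_le _ _) (Finset.sum_le_sum fun j _ => ?_)
            rw [norm_mul, norm_pow, pow_succ]
            exact mul_le_mul (hd' j) le_rfl
              (mul_nonneg (pow_nonneg hs0 j) hs0) (Nat.cast_nonneg H)
        _ = (H : ℝ) * ‖(φ α')⁻¹‖ * ∑ j ∈ Finset.range k, ‖(φ α')⁻¹‖ ^ j := by
            rw [Finset.mul_sum]
            refine Finset.sum_congr rfl fun j _ => ?_
            ring
        _ ≤ (H : ℝ) * ‖(φ α')⁻¹‖ * (1 - ‖(φ α')⁻¹‖)⁻¹ := by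
            refine mul_le_mul_of_nonneg_left (geom_aux hs0 hs1 k) ?_
            positivity
        _ = (H : ℝ) * (‖φ α'‖ - 1)⁻¹ := by
            have h2 : ‖φ α'‖ ≠ 0 := by positivity
            have key : ‖φ α'‖⁻¹ * (1 - ‖φ α'‖⁻¹)⁻¹ = (‖φ α'‖ - 1)⁻¹ := by
              rw [← mul_inv]
              congr 1
              rw [mul_sub, mul_one, mul_inv_cancel₀ h2]
            rw [norm_inv, mul_assoc, key]
        _ ≤ B := le_trans (le_max_right _ _) hB

end ZeroRep

namespace ZeroRepAuto

open ZeroRep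

theorem main (H : ℕ) (hH : 0 < H) (α : ℂ) (hα : IsAlgebraic ℚ α)
    (hconj : ∀ z : ℂ, aeval z (minpoly ℚ α) = 0 → ‖z‖ ≠ 1) :
    Language.IsRegular {w : List (A H) | valFrom α 0 w = 0} := by
  classical
  let S : Set ℂ := {q | (∃ u : List (A H), valFrom α 0 u = q) ∧
       ∃ w : List (A H), valFrom α q w = 0}
  have hSfin : S.Finite := S_finite hα hconj
  haveI : Fintype ↥S := hSfin.fintype
  have h0S : (0 : ℂ) ∈ S := ⟨⟨[], rfl⟩, ⟨[], rfl⟩⟩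
  let M : DFA (A H) (Option ↥S) :=
    { step := fun s d => match s with
        | none => none
        | some q => if h : (α * q.1 + (d.1 : ℂ)) ∈ S then some ⟨_, h⟩ else none
      start := some ⟨0, h0S⟩
      accept := {some ⟨0, h0S⟩} }
  have hnone : ∀ u : List (A H), M.evalFrom none u = none := by
    intro u
    induction u with
    | nil => rfl
    | cons a u ih => exact ih
  have hval_cons : ∀ (q : ℂ) (a : A H) (u : List (A H)),
      valFrom α q (a :: u) = valFrom α (α * q + (a.1 : ℂ)) u := fun _ _ _ => rfl
  -- soundness
  have L1 : ∀ (u : List (A H)) (q r : ↥S), M.evalFrom (some q) u = some r →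
      r.1 = valFrom α q.1 u := by
    intro u
    induction u with
    | nil =>
        intro q r h
        simp only [DFA.evalFrom_nil, Option.some.injEq] at h
        rw [← h, valFrom_nil]
    | cons a u ih =>
        intro q r h
        have hstep : M.evalFrom (some q) (a :: u) = M.evalFrom (M.step (some q) a) u := rfl
        by_cases hmem : (α * q.1 + (a.1 : ℂ)) ∈ S
        · have : M.step (some q) a = some ⟨_, hmem⟩ := by
            show (if h : (α * q.1 + (a.1 : ℂ)) ∈ S then _ else none) = _
            rw [dif_pos hmem]
          rw [hstep, this] at h
          rw [hval_cons]
          exact ih _ r h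
        · have : M.step (some q) a = none := by
            show (if h : (α * q.1 + (a.1 : ℂ)) ∈ S then _ else none) = _
            rw [dif_neg hmem]
          rw [hstep, this, hnone] at h
          exact absurd h (by simp)
  -- completeness
  have L2 : ∀ u : List (A H), (∃ w : List (A H), valFrom α (valFrom α 0 u) w = 0) →
      ∃ h : valFrom α 0 u ∈ S, M.eval u = some ⟨valFrom α 0 u, h⟩ := by
    intro u
    induction u using List.reverseRecOn with
    | nil => exact fun _ => ⟨h0S, rfl⟩
    | append_singleton u a ih =>
        intro hcomp
        obtain ⟨w, hw⟩ := hcomp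
        have hu : ∃ w : List (A H), valFrom α (valFrom α 0 u) w = 0 := by
          refine ⟨a :: w, ?_⟩
          rw [hval_cons, ← valFrom_concat]
          exact hw
        obtain ⟨hmem, heval⟩ := ih hu
        have hmem' : valFrom α 0 (u ++ [a]) ∈ S := ⟨⟨u ++ [a], rfl⟩, ⟨w, hw⟩⟩
        refine ⟨hmem', ?_⟩
        have hstep : M.eval (u ++ [a]) = M.step (M.eval u) a := M.eval_append_singleton u a
        rw [hstep, heval]
        have hcond : (α * valFrom α 0 u + (a.1 : ℂ)) ∈ S := by
          rw [← valFrom_concat]; exact hmem'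
        show (if h : (α * valFrom α 0 u + (a.1 : ℂ)) ∈ S then _ else none) = _
        rw [dif_pos hcond]
        congr 1
        exact Subtype.ext (valFrom_concat α 0 u a).symm
  refine ⟨Option ↥S, inferInstance, M, ?_⟩
  ext w
  rw [DFA.mem_accepts]
  show M.eval w ∈ ({some ⟨0, h0S⟩} : Set (Option ↥S)) ↔ valFrom α 0 w = 0
  constructor
  · intro h
    rw [Set.mem_singleton_iff] at h
    have := L1 w ⟨0, h0S⟩ ⟨0, h0S⟩ h
    exact this.symm
  · intro h
    obtain ⟨hmem, heval⟩ := L2 w ⟨[], by rw [valFrom_nil]; exact h⟩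
    rw [Set.mem_singleton_iff, heval]
    congr 1
    exact Subtype.ext h

end ZeroRepAuto


/-- Theorem 3: let `H > 0` and let `α` be an algebraic number none of whose conjugates has
modulus one.  Then the language of words `d_m … d_0` over the alphabet `{−H, …, H}` with
`Σ_{i=0}^{m} d_i α^i = 0` is regular, i.e. recognized by a finite automaton. -/
theorem zero_representations_regular (H : ℕ) (hH : 0 < H) (α : ℂ) (hα : IsAlgebraic ℚ α)
    (hconj : ∀ z : ℂ, aeval z (minpoly ℚ α) = 0 → ‖z‖ ≠ 1) :
    Language.IsRegular {w : List {d : ℤ // d.natAbs ≤ H} | wordValue α w = 0} := by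
  exact ZeroRepAuto.main H hH α hα hconj
end

section
/- The set of rational numbers belonging to 𝓕_2 is exactly {−2, −1, 1}; that is, for a rational number α, the minimal cardinality of a finite set S ⊆ ℂ with ℤ[α] = S[α] equals 2 if and only if α ∈ {−2, −1, 1}. In particular, 2 ∈ 𝓕_3. -/
open Polynomial Finset

/-- `α ∈ 𝓕_N`: the minimal cardinality of a finite `S ⊆ ℂ` with `ℤ[α] = S[α]` equals `N`. -/
def memF (α : ℂ) (N : ℕ) : Prop :=
  (∃ S : Finset ℂ, S.card = N ∧ repSet α ↑S = Zadj α) ∧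
  ∀ S : Finset ℂ, repSet α ↑S = Zadj α → N ≤ S.card

lemma intCast_mem_zadj (α : ℂ) (m : ℤ) : (m : ℂ) ∈ Zadj α :=
  ⟨C m, by simp⟩

lemma subset_of_repSet_eq {α : ℂ} {S : Set ℂ} (h : repSet α S = Zadj α) :
    S ⊆ Zadj α := by
  intro s hs
  rw [← h]
  exact ⟨0, fun _ => s, fun j hj => by simpa using hs, by simp⟩

lemma zadj_int_sub (k : ℤ) : Zadj ((k : ℤ) : ℂ) ⊆ Set.range (Int.cast : ℤ → ℂ) := by
  rintro z ⟨P, rfl⟩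
  refine ⟨aeval k P, ?_⟩
  have : ((k : ℤ) : ℂ) = algebraMap ℤ ℂ k := by simp
  rw [this, aeval_algebraMap_apply]
  simp

lemma zadj_rat (α : ℚ) : ∀ z ∈ Zadj ((α : ℚ) : ℂ), ∃ x : ℚ, (∃ P : ℤ[X], aeval α P = x) ∧ z = (x : ℂ) := by
  rintro z ⟨P, rfl⟩
  refine ⟨aeval α P, ⟨P, rfl⟩, ?_⟩
  have : ((α : ℚ) : ℂ) = algebraMap ℚ ℂ α := by simp
  rw [this, aeval_algebraMap_apply]
  simp


lemma sum_shift {R : Type*} [CommRing R] (g : ℕ → R) (x : R) (n : ℕ) :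
    ∑ j ∈ range (n + 1 + 1), g j * x ^ j
      = g 0 + x * ∑ j ∈ range (n + 1), g (j + 1) * x ^ j := by
  rw [Finset.sum_range_succ' (fun j => g j * x ^ j) (n + 1), Finset.mul_sum]
  simp only [pow_zero, mul_one]
  rw [add_comm]
  congr 1
  exact Finset.sum_congr rfl (fun j _ => by ring)

lemma digits_gen (b : ℤ) (D : Set ℤ) (hD : ∀ m : ℤ, m.natAbs ≤ 1 →
      ∃ (n : ℕ) (g : ℕ → ℤ), (∀ j ≤ n, g j ∈ D) ∧ m = ∑ j ∈ range (n + 1), g j * b ^ j)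
    (hstep : ∀ m : ℤ, 2 ≤ m.natAbs → ∃ ε ∈ D, ∃ m' : ℤ, m = ε + b * m' ∧ m'.natAbs < m.natAbs) :
    ∀ m : ℤ, ∃ (n : ℕ) (g : ℕ → ℤ), (∀ j ≤ n, g j ∈ D) ∧
      m = ∑ j ∈ range (n + 1), g j * b ^ j := by
  have main : ∀ (k : ℕ) (m : ℤ), m.natAbs ≤ k → ∃ (n : ℕ) (g : ℕ → ℤ), (∀ j ≤ n, g j ∈ D) ∧
      m = ∑ j ∈ range (n + 1), g j * b ^ j := by
    intro k
    induction k with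
    | zero => intro m hm; exact hD m (by omega)
    | succ k ih =>
      intro m hm
      by_cases h1 : m.natAbs ≤ 1
      · exact hD m h1
      · obtain ⟨ε, hε, m', hm', hlt⟩ := hstep m (by omega)
        obtain ⟨n', g', hg', hsum⟩ := ih m' (by omega)
        refine ⟨n' + 1, fun j => if j = 0 then ε else g' (j - 1), ?_, ?_⟩
        · intro j hj
          by_cases hj0 : j = 0
          · simpa [hj0] using hε
          · simpa [hj0] using hg' (j - 1) (by omega)
        · rw [sum_shift]
          have : ∑ j ∈ range (n' + 1), (if j + 1 = 0 then ε else g' (j + 1 - 1)) * b ^ j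
              = ∑ j ∈ range (n' + 1), g' j * b ^ j := by
            apply Finset.sum_congr rfl; intro j _; simp
          rw [this, ← hsum, hm']
          simp
  exact fun m => main m.natAbs m le_rfl

lemma digits_neg_two (m : ℤ) : ∃ (n : ℕ) (g : ℕ → ℤ), (∀ j ≤ n, g j = 0 ∨ g j = 1) ∧
    m = ∑ j ∈ range (n + 1), g j * (-2) ^ j := by
  refine digits_gen (-2) {0, 1} ?_ ?_ m
  · intro m hm
    have hlo : -1 ≤ m := by omega
    have hhi : m ≤ 1 := by omega
    interval_cases m
    · refine ⟨1, fun j => 1, by simp, ?_⟩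
      simp [Finset.sum_range_succ]
    · exact ⟨0, fun _ => 0, by simp, by simp⟩
    · exact ⟨0, fun _ => 1, by simp, by simp⟩
  · intro m hm
    refine ⟨m % 2, by rcases Int.emod_two_eq_zero_or_one m with h | h <;> simp [h], ?_⟩
    obtain ⟨c, hc⟩ : (2 : ℤ) ∣ (m - m % 2) := Int.dvd_self_sub_of_emod_eq rfl
    refine ⟨-c, by omega, by omega⟩

lemma digits_two (m : ℤ) : ∃ (n : ℕ) (g : ℕ → ℤ), (∀ j ≤ n, g j = -1 ∨ g j = 0 ∨ g j = 1) ∧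
    m = ∑ j ∈ range (n + 1), g j * 2 ^ j := by
  refine digits_gen 2 {-1, 0, 1} ?_ ?_ m
  · intro m hm
    have hlo : -1 ≤ m := by omega
    have hhi : m ≤ 1 := by omega
    refine ⟨0, fun _ => m, by intro j hj; simp; omega, by simp⟩
  · intro m hm
    refine ⟨m % 2, by rcases Int.emod_two_eq_zero_or_one m with h | h <;> simp [h], ?_⟩
    obtain ⟨c, hc⟩ : (2 : ℤ) ∣ (m - m % 2) := Int.dvd_self_sub_of_emod_eq rfl
    refine ⟨c, by omega, by omega⟩

lemma repSet_eq_int (k : ℤ) (S : Finset ℂ)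
    (hS : ∀ s ∈ S, ∃ d : ℤ, s = (d : ℂ))
    (hdig : ∀ m : ℤ, ∃ (n : ℕ) (g : ℕ → ℤ), (∀ j ≤ n, ((g j : ℤ) : ℂ) ∈ S) ∧
      m = ∑ j ∈ range (n + 1), g j * k ^ j) :
    repSet ((k : ℤ) : ℂ) ↑S = Zadj ((k : ℤ) : ℂ) := by
  apply Set.eq_of_subset_of_subset
  · rintro z ⟨n, f, hf, rfl⟩
    classical
    set g : ℕ → ℤ := fun j => if h : ∃ d : ℤ, f j = (d : ℂ) then h.choose else 0 with hg
    have key : ∀ j ∈ range (n + 1), f j * ((k : ℤ) : ℂ) ^ j = ((g j * k ^ j : ℤ) : ℂ) := by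
      intro j hj
      have hfj : ∃ d : ℤ, f j = (d : ℂ) := hS (f j) (hf j (by simp at hj; omega))
      have : f j = ((g j : ℤ) : ℂ) := by
        rw [hg]
        simp only [dif_pos hfj]
        exact hfj.choose_spec
      rw [this]
      push_cast
      ring
    rw [Finset.sum_congr rfl key, ← Int.cast_sum]
    exact intCast_mem_zadj _ _
  · intro z hz
    obtain ⟨m, rfl⟩ := zadj_int_sub k hz
    obtain ⟨n, g, hg, hsum⟩ := hdig m
    refine ⟨n, fun j => ((g j : ℤ) : ℂ), fun j hj => hg j hj, ?_⟩
    rw [hsum]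
    push_cast
    rfl

lemma digits_one (m : ℤ) : ∃ (n : ℕ) (g : ℕ → ℤ), (∀ j ≤ n, g j = 1 ∨ g j = -1) ∧
    m = ∑ j ∈ range (n + 1), g j * 1 ^ j := by
  rcases lt_trichotomy m 0 with h | h | h
  · refine ⟨(-m - 1).toNat, fun _ => -1, by simp, ?_⟩
    simp
    omega
  · refine ⟨1, fun j => if j = 0 then 1 else -1, by intro j hj; by_cases h0 : j = 0 <;> simp [h0], ?_⟩
    rw [h]
    simp [Finset.sum_range_succ]
  · refine ⟨(m - 1).toNat, fun _ => 1, by simp, ?_⟩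
    simp
    omega

lemma digits_negone (m : ℤ) : ∃ (n : ℕ) (g : ℕ → ℤ), (∀ j ≤ n, g j = 1 ∨ g j = -1) ∧
    m = ∑ j ∈ range (n + 1), g j * (-1) ^ j := by
  have hpm : ∀ j : ℕ, (-1 : ℤ) ^ j = 1 ∨ (-1 : ℤ) ^ j = -1 := by
    intro j
    rcases Nat.even_or_odd j with h | h
    · left; exact h.neg_one_pow
    · right; exact h.neg_one_pow
  rcases lt_trichotomy m 0 with h | h | h
  · refine ⟨(-m - 1).toNat, fun j => -(-1) ^ j, by intro j _; rcases hpm j with h' | h' <;> simp [h'], ?_⟩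
    have : ∀ j ∈ range ((-m - 1).toNat + 1), (-(-1 : ℤ) ^ j) * (-1) ^ j = -1 := by
      intro j _
      rcases hpm j with h' | h' <;> rw [h'] <;> ring
    rw [Finset.sum_congr rfl this, Finset.sum_const]
    simp
    omega
  · refine ⟨1, fun _ => 1, by simp, ?_⟩
    rw [h]
    simp [Finset.sum_range_succ]
  · refine ⟨(m - 1).toNat, fun j => (-1) ^ j, by intro j _; exact hpm j, ?_⟩
    have : ∀ j ∈ range ((m - 1).toNat + 1), ((-1 : ℤ) ^ j) * (-1) ^ j = 1 := by
      intro j _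
      rcases hpm j with h' | h' <;> rw [h'] <;> ring
    rw [Finset.sum_congr rfl this, Finset.sum_const]
    simp
    omega

lemma repSet_singleton {α s z : ℂ} (hz : z ∈ repSet α ↑({s} : Finset ℂ)) :
    ∃ n : ℕ, z = s * ∑ j ∈ range (n + 1), α ^ j := by
  obtain ⟨n, f, hf, rfl⟩ := hz
  refine ⟨n, ?_⟩
  rw [Finset.mul_sum]
  apply Finset.sum_congr rfl
  intro j hj
  have : f j = s := by simpa using hf j (by simp at hj; omega)
  rw [this]

lemma nonempty_of_repSet_eq {α : ℂ} {S : Finset ℂ} (h : repSet α ↑S = Zadj α) :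
    S.Nonempty := by
  have h0 : (0 : ℂ) ∈ repSet α ↑S := by
    rw [h]; simpa using intCast_mem_zadj α 0
  obtain ⟨n, f, hf, _⟩ := h0
  exact ⟨f 0, hf 0 (by omega)⟩

lemma card_ge_two_of_gs_ne_zero {α : ℂ} (hg : ∀ n : ℕ, (∑ j ∈ range (n + 1), α ^ j) ≠ 0)
    {S : Finset ℂ} (h : repSet α ↑S = Zadj α) : 2 ≤ S.card := by
  by_contra hc
  have h1 : S.card = 1 := by
    have := (nonempty_of_repSet_eq h).card_pos
    omega
  obtain ⟨s, rfl⟩ := Finset.card_eq_one.mp h1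
  have h0 : (0 : ℂ) ∈ repSet α ↑({s} : Finset ℂ) := by
    rw [h]; simpa using intCast_mem_zadj α 0
  have hone : (1 : ℂ) ∈ repSet α ↑({s} : Finset ℂ) := by
    rw [h]; simpa using intCast_mem_zadj α 1
  obtain ⟨n, hn⟩ := repSet_singleton h0
  obtain ⟨n', hn'⟩ := repSet_singleton hone
  have hs : s = 0 := by
    rcases mul_eq_zero.mp hn.symm with h' | h'
    · exact h'
    · exact absurd h' (hg n)
  rw [hs, zero_mul] at hn'
  exact one_ne_zero hn'

lemma card_ge_two_neg_one {S : Finset ℂ} (h : repSet ((-1 : ℤ) : ℂ) ↑S = Zadj ((-1 : ℤ) : ℂ)) :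
    2 ≤ S.card := by
  have hgs : ∀ n : ℕ, (∑ j ∈ range (n + 1), ((-1 : ℤ) : ℂ) ^ j) = 0 ∨
      (∑ j ∈ range (n + 1), ((-1 : ℤ) : ℂ) ^ j) = 1 := by
    intro n
    push_cast
    rw [neg_one_geom_sum]
    by_cases hev : Even (n + 1) <;> simp [hev]
  by_contra hc
  have h1 : S.card = 1 := by
    have := (nonempty_of_repSet_eq h).card_pos
    omega
  obtain ⟨s, rfl⟩ := Finset.card_eq_one.mp h1
  have hone : (1 : ℂ) ∈ repSet ((-1 : ℤ) : ℂ) ↑({s} : Finset ℂ) := by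
    rw [h]; simpa using intCast_mem_zadj ((-1 : ℤ) : ℂ) 1
  have htwo : (2 : ℂ) ∈ repSet ((-1 : ℤ) : ℂ) ↑({s} : Finset ℂ) := by
    rw [h]; simpa using intCast_mem_zadj ((-1 : ℤ) : ℂ) 2
  obtain ⟨n, hn⟩ := repSet_singleton hone
  obtain ⟨n', hn'⟩ := repSet_singleton htwo
  have hs : s = 1 := by
    rcases hgs n with h' | h' <;> rw [h'] at hn <;> simp at hn
    exact hn.symm
  rcases hgs n' with h' | h' <;> rw [hs, h', one_mul] at hn' <;> norm_num at hn'

lemma gs_ne_zero_one : ∀ n : ℕ, (∑ j ∈ range (n + 1), ((1 : ℤ) : ℂ) ^ j) ≠ 0 := by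
  intro n
  simp
  exact_mod_cast Nat.cast_add_one_ne_zero (R := ℂ) n

lemma gs_ne_zero_of_two_le_abs {x : ℂ} (hx : 2 ≤ ‖x‖) :
    ∀ n : ℕ, (∑ j ∈ range (n + 1), x ^ j) ≠ 0 := by
  intro n
  have hx1 : x ≠ 1 := by
    intro h; rw [h] at hx; norm_num at hx
  have hx1' : x - 1 ≠ 0 := sub_ne_zero.mpr hx1
  rw [geom_sum_eq hx1]
  intro h
  rcases div_eq_zero_iff.mp h with h' | h'
  swap
  · exact hx1' h'
  have hxp : x ^ (n + 1) = 1 := by linear_combination h'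
  have : ‖x ^ (n + 1)‖ = 1 := by rw [hxp]; simp
  rw [norm_pow] at this
  have h2 : (2 : ℝ) ^ (n + 1) ≤ 1 := by
    calc (2 : ℝ) ^ (n + 1) ≤ ‖x‖ ^ (n + 1) := by
          apply pow_le_pow_left₀ (by norm_num) hx
        _ = 1 := this
  have : (2 : ℝ) ^ (n + 1) ≥ 2 ^ 1 := by
    apply pow_le_pow_right₀ (by norm_num) (by omega)
  linarith


lemma int_geom_two (k : ℕ) : ∑ j ∈ range k, (2 : ℤ) ^ j = 2 ^ k - 1 := by
  induction k with
  | zero => simp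
  | succ k ih => rw [Finset.sum_range_succ, ih]; ring

lemma keyC (a d : ℤ) (hd : d ≠ 0)
    (H : ∀ m : ℤ, ∃ (k : ℕ) (M : ℤ), 0 ≤ M ∧ M ≤ 2 ^ (k + 1) - 1 ∧
      m = a * (2 ^ (k + 1) - 1) + d * M) : False := by
  -- d is odd
  have hdodd : ¬ (2 : ℤ) ∣ d := by
    intro h2
    obtain ⟨k0, M0, _, _, h0⟩ := H 0
    obtain ⟨k1, M1, _, _, h1⟩ := H 1
    have hK0 : ¬ (2 : ℤ) ∣ (2 ^ (k0 + 1) - 1) := by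
      intro hh
      have : (2 : ℤ) ∣ 2 ^ (k0 + 1) := dvd_pow_self 2 (by omega)
      omega
    have hK1 : ¬ (2 : ℤ) ∣ (2 ^ (k1 + 1) - 1) := by
      intro hh
      have : (2 : ℤ) ∣ 2 ^ (k1 + 1) := dvd_pow_self 2 (by omega)
      omega
    -- from h0 : a even; from h1 : a odd
    have ha0 : (2 : ℤ) ∣ a * (2 ^ (k0 + 1) - 1) := by
      have : (2 : ℤ) ∣ d * M0 := h2.mul_right M0
      omega
    have ha1 : ¬ (2 : ℤ) ∣ a * (2 ^ (k1 + 1) - 1) := by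
      have : (2 : ℤ) ∣ d * M1 := h2.mul_right M1
      omega
    have haeven : (2 : ℤ) ∣ a := by
      rcases (Int.prime_two.dvd_mul.mp ha0) with h | h
      · exact h
      · exact absurd h hK0
    exact ha1 (haeven.mul_right _)
  -- d ∣ a
  have hda : d ∣ a := by
    obtain ⟨k, M, _, _, hm⟩ := H (-a)
    have h2k : a * 2 ^ (k + 1) = d * (-M) := by linarith [hm]
    have hdvd : d ∣ a * 2 ^ (k + 1) := ⟨-M, h2k⟩
    have hcop : IsCoprime d (2 : ℤ) := by
      obtain ⟨c, hc⟩ : ∃ c, d = 2 * c + 1 := ⟨d / 2, by omega⟩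
      exact ⟨1, -c, by omega⟩
    exact (hcop.pow_right).dvd_of_dvd_mul_right hdvd
  -- then d ∣ 1
  have hd1 : d = 1 ∨ d = -1 := by
    obtain ⟨k, M, _, _, hm⟩ := H 1
    have : d ∣ 1 := by
      have : d ∣ a * (2 ^ (k + 1) - 1) + d * M :=
        dvd_add (hda.mul_right _) (Dvd.intro M rfl)
      rwa [← hm] at this
    rcases Int.isUnit_iff.mp (isUnit_of_dvd_one this) with h | h <;> [left; right] <;> exact h
  -- contradiction from 1 and -1
  obtain ⟨k, M, hM0, hMle, hm⟩ := H 1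
  obtain ⟨k', M', hM0', hMle', hm'⟩ := H (-1)
  have hKpos : (1 : ℤ) ≤ 2 ^ (k + 1) - 1 := by
    have : (2 : ℤ) ^ 1 ≤ 2 ^ (k + 1) := pow_le_pow_right₀ (by norm_num) (by omega)
    omega
  have hKpos' : (1 : ℤ) ≤ 2 ^ (k' + 1) - 1 := by
    have : (2 : ℤ) ^ 1 ≤ 2 ^ (k' + 1) := pow_le_pow_right₀ (by norm_num) (by omega)
    omega
  rcases hd1 with rfl | rfl
  · -- d = 1 : 1 = a K + M, -1 = a K' + M'
    have ha1 : 0 ≤ a := by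
      by_contra h
      have : a + 1 ≤ 0 := by omega
      have : (a + 1) * (2 ^ (k + 1) - 1) ≤ 0 :=
        mul_nonpos_of_nonpos_of_nonneg (by omega) (by omega)
      nlinarith
    have : a * (2 ^ (k' + 1) - 1) ≥ 0 := mul_nonneg ha1 (by omega)
    omega
  · -- d = -1 : 1 = a K - M, -1 = a K' - M'
    have ha1 : 1 ≤ a := by
      by_contra h
      have : a * (2 ^ (k + 1) - 1) ≤ 0 := mul_nonpos_of_nonpos_of_nonneg (by omega) (by omega)
      omega
    have : (a - 1) * (2 ^ (k' + 1) - 1) ≥ 0 := mul_nonneg (by omega) (by omega)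
    nlinarith

lemma card_ne_two_base2 {S : Finset ℂ} (h : repSet ((2 : ℤ) : ℂ) ↑S = Zadj ((2 : ℤ) : ℂ)) :
    S.card ≠ 2 := by
  classical
  intro h2
  obtain ⟨x, y, hxy, rfl⟩ := Finset.card_eq_two.mp h2
  have hsub : ({x, y} : Finset ℂ) → True := fun _ => trivial
  obtain ⟨a, ha⟩ := zadj_int_sub 2 (subset_of_repSet_eq h (by simp : x ∈ (↑({x, y} : Finset ℂ) : Set ℂ)))
  obtain ⟨b, hb⟩ := zadj_int_sub 2 (subset_of_repSet_eq h (by simp : y ∈ (↑({x, y} : Finset ℂ) : Set ℂ)))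
  have hab : a ≠ b := by
    rintro rfl
    exact hxy (by rw [← ha, ← hb])
  apply keyC a (b - a) (by omega)
  intro m
  have hm : (m : ℂ) ∈ repSet ((2 : ℤ) : ℂ) ↑({x, y} : Finset ℂ) := by
    rw [h]; exact intCast_mem_zadj _ m
  obtain ⟨n, f, hf, hsum⟩ := hm
  set ε : ℕ → ℤ := fun j => if f j = (a : ℂ) then 0 else 1 with hε
  have hε01 : ∀ j, ε j = 0 ∨ ε j = 1 := by
    intro j; by_cases hj : f j = (a : ℂ) <;> simp [hε, hj]
  have hfj : ∀ j ≤ n, f j = ((a + ε j * (b - a) : ℤ) : ℂ) := by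
    intro j hj
    rcases (by simpa using hf j hj : f j = x ∨ f j = y) with h' | h'
    · rw [h', ← ha]
      have : f j = (a : ℂ) := by rw [h', ← ha]
      simp [hε, this]
    · by_cases hfa : f j = (a : ℂ)
      · simp [hε, hfa]
      · simp only [hε, if_neg hfa]
        rw [h', ← hb]
        push_cast
        ring
  refine ⟨n, ∑ j ∈ range (n + 1), ε j * 2 ^ j, ?_, ?_, ?_⟩
  · apply Finset.sum_nonneg
    intro j _
    rcases hε01 j with h' | h' <;> simp [h'] <;> positivity
  · rw [← int_geom_two (n + 1)]
    apply Finset.sum_le_sum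
    intro j _
    rcases hε01 j with h' | h' <;> simp [h']
  · have key : ∀ j ∈ range (n + 1), f j * ((2 : ℤ) : ℂ) ^ j
        = (((a + ε j * (b - a)) * 2 ^ j : ℤ) : ℂ) := by
      intro j hj
      rw [hfj j (by simp at hj; omega)]
      push_cast
      ring
    rw [Finset.sum_congr rfl key, ← Int.cast_sum] at hsum
    have hm' : m = ∑ j ∈ range (n + 1), (a + ε j * (b - a)) * 2 ^ j := by
      exact_mod_cast hsum
    rw [hm']
    have expand : ∀ j ∈ range (n + 1), (a + ε j * (b - a)) * 2 ^ j
        = a * 2 ^ j + (b - a) * (ε j * 2 ^ j) := by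
      intro j _; ring
    rw [Finset.sum_congr rfl expand, Finset.sum_add_distrib, ← Finset.mul_sum, ← Finset.mul_sum,
      int_geom_two]

lemma geom_bound (r : ℝ) (h0 : 0 ≤ r) (h1 : r < 1) (k : ℕ) :
    ∑ j ∈ range k, r ^ j ≤ (1 - r)⁻¹ := by
  have hg := geom_sum_mul r k
  have hpos : (0 : ℝ) < 1 - r := by linarith
  have key : (∑ j ∈ range k, r ^ j) * (1 - r) ≤ 1 := by nlinarith [pow_nonneg h0 k]
  calc ∑ j ∈ range k, r ^ j = (∑ j ∈ range k, r ^ j) * (1 - r) * (1 - r)⁻¹ := by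
        field_simp
    _ ≤ 1 * (1 - r)⁻¹ := mul_le_mul_of_nonneg_right key (by positivity)
    _ = (1 - r)⁻¹ := one_mul _

lemma no_repSet_of_abs_lt_one {α : ℚ} (hα : |α| < 1) (S : Finset ℂ) :
    repSet ((α : ℚ) : ℂ) ↑S ≠ Zadj ((α : ℚ) : ℂ) := by
  intro h
  set r : ℝ := ‖((α : ℚ) : ℂ)‖ with hr
  have hr0 : 0 ≤ r := norm_nonneg _
  have hr1 : r < 1 := by
    have : ((α : ℚ) : ℂ) = (((α : ℝ)) : ℂ) := by push_cast; ring
    rw [hr, this, Complex.norm_real, Real.norm_eq_abs]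
    rw [show |(α : ℝ)| = ((|α| : ℚ) : ℝ) by push_cast; ring]
    exact_mod_cast hα
  set M : ℝ := ∑ s ∈ S, ‖s‖ with hM
  have hMs : ∀ s ∈ S, ‖s‖ ≤ M :=
    fun s hs => Finset.single_le_sum (fun t _ => norm_nonneg t) hs
  have hM0 : 0 ≤ M := Finset.sum_nonneg fun t _ => norm_nonneg t
  set B : ℝ := M * (1 - r)⁻¹ with hB
  have hbound : ∀ z ∈ repSet ((α : ℚ) : ℂ) ↑S, ‖z‖ ≤ B := by
    rintro z ⟨n, f, hf, rfl⟩
    calc ‖∑ j ∈ range (n + 1), f j * ((α : ℚ) : ℂ) ^ j‖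
        ≤ ∑ j ∈ range (n + 1), ‖f j * ((α : ℚ) : ℂ) ^ j‖ := by
          simpa using
            norm_sum_le (range (n + 1)) (fun j => f j * ((α : ℚ) : ℂ) ^ j)
      _ ≤ ∑ j ∈ range (n + 1), M * r ^ j := by
          apply Finset.sum_le_sum
          intro j hj
          rw [norm_mul, norm_pow]
          apply mul_le_mul_of_nonneg_right _ (by positivity)
          exact hMs _ (hf j (by simp at hj; omega))
      _ = M * ∑ j ∈ range (n + 1), r ^ j := by rw [Finset.mul_sum]
      _ ≤ M * (1 - r)⁻¹ := by
          apply mul_le_mul_of_nonneg_left (geom_bound r hr0 hr1 (n + 1)) hM0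
  set m : ℤ := ⌈B⌉ + 1 with hm
  have hmem : ((m : ℤ) : ℂ) ∈ repSet ((α : ℚ) : ℂ) ↑S := by
    rw [h]; exact intCast_mem_zadj _ m
  have h1 := hbound _ hmem
  rw [Complex.norm_intCast] at h1
  have h2 : (m : ℝ) ≤ B := le_trans (le_abs_self _) h1
  have h3 : B ≤ (⌈B⌉ : ℝ) := Int.le_ceil B
  have : ((⌈B⌉ + 1 : ℤ) : ℝ) ≤ (⌈B⌉ : ℝ) := by
    calc ((⌈B⌉ + 1 : ℤ) : ℝ) = (m : ℝ) := by rw [hm]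
      _ ≤ B := h2
      _ ≤ _ := h3
  push_cast at this
  linarith

lemma aeval_rat_form (α : ℚ) (P : ℤ[X]) :
    ∃ (M : ℤ) (T : ℕ), aeval α P = (M : ℚ) / (α.den : ℚ) ^ T := by
  have hd : ((α.den : ℚ)) ≠ 0 := by exact_mod_cast α.den_nz
  induction P using Polynomial.induction_on with
  | C a => exact ⟨a, 0, by simp⟩
  | add p q hp hq =>
      obtain ⟨M1, T1, h1⟩ := hp
      obtain ⟨M2, T2, h2⟩ := hq
      refine ⟨M1 * (α.den : ℤ) ^ T2 + M2 * (α.den : ℤ) ^ T1, T1 + T2, ?_⟩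
      rw [map_add, h1, h2, div_add_div _ _ (pow_ne_zero T1 hd) (pow_ne_zero T2 hd)]
      rw [← pow_add]
      congr 1
      push_cast
      ring
  | monomial n a ih =>
      obtain ⟨M, T, hM⟩ := ih
      refine ⟨M * α.num, T + 1, ?_⟩
      have hX : (C a : ℤ[X]) * X ^ (n + 1) = (C a * X ^ n) * X := by rw [pow_succ, mul_assoc]
      rw [hX, map_mul, hM, aeval_X]
      have hnum : α * (α.den : ℚ) = α.num := Rat.mul_den_eq_num α
      field_simp
      push_cast
      linear_combination ((M : ℚ) * (α.den : ℚ) ^ T) * hnum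

lemma common_den (α : ℚ) {x y : ℚ} {M1 M2 : ℤ} {T1 T2 : ℕ}
    (hx : x = (M1 : ℚ) / (α.den : ℚ) ^ T1) (hy : y = (M2 : ℚ) / (α.den : ℚ) ^ T2) :
    ∃ (A B : ℤ) (T : ℕ), x = (A : ℚ) / (α.den : ℚ) ^ T ∧ y = (B : ℚ) / (α.den : ℚ) ^ T := by
  have hd : ((α.den : ℚ)) ≠ 0 := by exact_mod_cast α.den_nz
  refine ⟨M1 * (α.den : ℤ) ^ (max T1 T2 - T1), M2 * (α.den : ℤ) ^ (max T1 T2 - T2),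
    max T1 T2, ?_, ?_⟩
  · rw [hx]
    rw [show max T1 T2 = T1 + (max T1 T2 - T1) by omega, pow_add]
    field_simp
    push_cast
    ring
    rw [Nat.add_sub_cancel]
  · rw [hy]
    rw [show max T1 T2 = T2 + (max T1 T2 - T2) by omega, pow_add]
    field_simp
    push_cast
    ring
    rw [Nat.add_sub_cancel]


lemma modp {α : ℚ} (h3 : 3 ≤ α.num.natAbs) {S : Finset ℂ} (h2 : S.card = 2)
    (h : repSet ((α : ℚ) : ℂ) ↑S = Zadj ((α : ℚ) : ℂ)) : False := by
  classical
  set P : ℕ := α.num.natAbs with hP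
  haveI : NeZero P := ⟨by omega⟩
  have hd : ((α.den : ℚ)) ≠ 0 := by exact_mod_cast α.den_nz
  obtain ⟨x, y, hxy, rfl⟩ := Finset.card_eq_two.mp h2
  -- x and y are rationals of the form A / den^T
  obtain ⟨xq, ⟨Px, hPx⟩, hxq⟩ := zadj_rat α x
    (subset_of_repSet_eq h (by simp : x ∈ (↑({x, y} : Finset ℂ) : Set ℂ)))
  obtain ⟨yq, ⟨Py, hPy⟩, hyq⟩ := zadj_rat α y
    (subset_of_repSet_eq h (by simp : y ∈ (↑({x, y} : Finset ℂ) : Set ℂ)))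
  obtain ⟨M1, T1, h1⟩ := aeval_rat_form α Px
  obtain ⟨M2, T2, h2'⟩ := aeval_rat_form α Py
  rw [hPx] at h1
  rw [hPy] at h2'
  obtain ⟨A, B, T, hA, hB⟩ := common_den α h1 h2'
  -- the denominator is invertible mod P
  have hcop : (α.den).Coprime P := (Rat.reduced α).symm
  have hu : IsUnit ((α.den : ℕ) : ZMod P) := (ZMod.isUnit_iff_coprime α.den P).mpr hcop
  obtain ⟨c, hc⟩ := hu.exists_right_inv
  have hnum0 : ((α.num : ℤ) : ZMod P) = 0 := by
    rw [ZMod.intCast_zmod_eq_zero_iff_dvd]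
    exact Int.natAbs_dvd.mpr dvd_rfl
  -- key step : every integer m satisfies (m : ZMod P) * den^T ∈ {A, B}
  have key : ∀ m : ℤ, ((m : ZMod P) * ((α.den : ℕ) : ZMod P) ^ T = ((A : ℤ) : ZMod P))
      ∨ ((m : ZMod P) * ((α.den : ℕ) : ZMod P) ^ T = ((B : ℤ) : ZMod P)) := by
    intro m
    have hm : ((m : ℤ) : ℂ) ∈ repSet ((α : ℚ) : ℂ) ↑({x, y} : Finset ℂ) := by
      rw [h]; exact intCast_mem_zadj _ m
    obtain ⟨n, f, hf, hsum⟩ := hm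
    set g : ℕ → ℤ := fun j => if f j = x then A else B with hg
    -- coefficients as rationals
    have hfj : ∀ j ≤ n, f j = (((g j : ℚ) / (α.den : ℚ) ^ T : ℚ) : ℂ) := by
      intro j hj
      rcases (by simpa using hf j hj : f j = x ∨ f j = y) with h' | h'
      · simp only [hg, if_pos h']
        rw [h', hxq, hA]
      · by_cases hfx : f j = x
        · simp only [hg, if_pos hfx]
          rw [hfx, hxq, hA]
        · simp only [hg, if_neg hfx]
          rw [h', hyq, hB]
    -- rational equation
    have hratC : ((m : ℚ) : ℂ) = ((∑ j ∈ range (n + 1), (g j : ℚ) / (α.den : ℚ) ^ T * α ^ j : ℚ) : ℂ) := by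
      push_cast
      rw [hsum]
      apply Finset.sum_congr rfl
      intro j hj
      rw [hfj j (by simp at hj; omega)]
      push_cast
      ring
    have hrat : (m : ℚ) = ∑ j ∈ range (n + 1), (g j : ℚ) / (α.den : ℚ) ^ T * α ^ j := by
      exact_mod_cast hratC
    -- integer equation: multiply by den^(n+T)
    have hintQ : ((m * (α.den : ℤ) ^ (n + T) : ℤ) : ℚ)
        = ((∑ j ∈ range (n + 1), g j * α.num ^ j * (α.den : ℤ) ^ (n - j) : ℤ) : ℚ) := by
      push_cast
      rw [hrat, Finset.sum_mul]
      apply Finset.sum_congr rfl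
      intro j hj
      have hjn : j ≤ n := by simp at hj; omega
      have hαj : (α : ℚ) ^ j = (α.num : ℚ) ^ j / (α.den : ℚ) ^ j := by
        rw [← Rat.num_div_den α, div_pow]
        rw [Rat.num_div_den]
      rw [hαj]
      rw [show n + T = (n - j) + j + T by omega]
      rw [pow_add, pow_add]
      field_simp
    have hint : m * (α.den : ℤ) ^ (n + T)
        = ∑ j ∈ range (n + 1), g j * α.num ^ j * (α.den : ℤ) ^ (n - j) := by
      exact_mod_cast hintQ
    -- reduce mod P
    have hmodP : (m : ZMod P) * ((α.den : ℕ) : ZMod P) ^ (n + T)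
        = ((g 0 : ℤ) : ZMod P) * ((α.den : ℕ) : ZMod P) ^ n := by
      have := congrArg (fun t : ℤ => (t : ZMod P)) hint
      push_cast at this
      rw [this]
      rw [Finset.sum_eq_single_of_mem 0 (by simp)]
      · simp
      · intro j hj hj0
        rw [hnum0]
        rw [zero_pow hj0]
        ring
    -- cancel the unit den^n
    have hpowc : ((α.den : ℕ) : ZMod P) ^ n * c ^ n = 1 := by
      rw [← mul_pow, hc, one_pow]
    have hfinal : (m : ZMod P) * ((α.den : ℕ) : ZMod P) ^ T = ((g 0 : ℤ) : ZMod P) := by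
      linear_combination (c ^ n) * hmodP +
        (((g 0 : ℤ) : ZMod P) - (m : ZMod P) * ((α.den : ℕ) : ZMod P) ^ T) * hpowc
    by_cases h0 : f 0 = x
    · left; rw [hfinal]; simp [hg, h0]
    · right; rw [hfinal]; simp [hg, h0]
  -- counting: ZMod P has at most 2 elements
  have huniv : (Finset.univ : Finset (ZMod P)) ⊆ {((A : ℤ) : ZMod P), ((B : ℤ) : ZMod P)} := by
    intro w _
    obtain ⟨m, hm⟩ := ZMod.intCast_surjective (n := P) (w * c ^ T)
    have hmqT : (m : ZMod P) * ((α.den : ℕ) : ZMod P) ^ T = w := by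
      rw [hm]
      have : ((α.den : ℕ) : ZMod P) ^ T * c ^ T = 1 := by rw [← mul_pow, hc, one_pow]
      linear_combination w * this
    rcases key m with h' | h' <;> rw [hmqT] at h' <;> simp [h']
  have hcard : Fintype.card (ZMod P) ≤ 2 := by
    calc Fintype.card (ZMod P) = (Finset.univ : Finset (ZMod P)).card := Finset.card_univ.symm
      _ ≤ ({((A : ℤ) : ZMod P), ((B : ℤ) : ZMod P)} : Finset (ZMod P)).card :=
          Finset.card_le_card huniv
      _ ≤ 2 := Finset.card_insert_le _ _ |>.trans (by simp)
  rw [ZMod.card P] at hcard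
  omega

lemma memF_neg_two : memF (((-2 : ℤ) : ℤ) : ℂ) 2 := by
  constructor
  · refine ⟨{0, 1}, Finset.card_pair (by norm_num), ?_⟩
    apply repSet_eq_int (-2)
    · intro s hs
      rcases (by simpa using hs : s = 0 ∨ s = 1) with rfl | rfl
      · exact ⟨0, by norm_num⟩
      · exact ⟨1, by norm_num⟩
    · intro m
      obtain ⟨n, g, h01, hsum⟩ := digits_neg_two m
      refine ⟨n, g, ?_, hsum⟩
      intro j hj
      rcases h01 j hj with h' | h' <;> simp [h']
  · intro S hS
    apply card_ge_two_of_gs_ne_zero _ hS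
    apply gs_ne_zero_of_two_le_abs
    rw [Complex.norm_intCast]
    norm_num

lemma memF_one : memF (((1 : ℤ) : ℤ) : ℂ) 2 := by
  constructor
  · refine ⟨{1, -1}, Finset.card_pair (by norm_num), ?_⟩
    apply repSet_eq_int 1
    · intro s hs
      rcases (by simpa using hs : s = 1 ∨ s = -1) with rfl | rfl
      · exact ⟨1, by norm_num⟩
      · exact ⟨-1, by norm_num⟩
    · intro m
      obtain ⟨n, g, h01, hsum⟩ := digits_one m
      refine ⟨n, g, ?_, hsum⟩
      intro j hj
      rcases h01 j hj with h' | h' <;> simp [h']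
  · intro S hS
    exact card_ge_two_of_gs_ne_zero gs_ne_zero_one hS

lemma memF_neg_one : memF (((-1 : ℤ) : ℤ) : ℂ) 2 := by
  constructor
  · refine ⟨{1, -1}, Finset.card_pair (by norm_num), ?_⟩
    apply repSet_eq_int (-1)
    · intro s hs
      rcases (by simpa using hs : s = 1 ∨ s = -1) with rfl | rfl
      · exact ⟨1, by norm_num⟩
      · exact ⟨-1, by norm_num⟩
    · intro m
      obtain ⟨n, g, h01, hsum⟩ := digits_negone m
      refine ⟨n, g, ?_, hsum⟩
      intro j hj
      rcases h01 j hj with h' | h' <;> simp [h']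
  · intro S hS
    exact card_ge_two_neg_one hS

lemma memF_two : memF (((2 : ℤ) : ℤ) : ℂ) 3 := by
  constructor
  · refine ⟨{-1, 0, 1}, ?_, ?_⟩
    · rw [Finset.card_insert_of_notMem (by norm_num), Finset.card_pair (by norm_num)]
    · apply repSet_eq_int 2
      · intro s hs
        rcases (by simpa using hs : s = -1 ∨ s = 0 ∨ s = 1) with rfl | rfl | rfl
        · exact ⟨-1, by norm_num⟩
        · exact ⟨0, by norm_num⟩
        · exact ⟨1, by norm_num⟩
      · intro m
        obtain ⟨n, g, h01, hsum⟩ := digits_two m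
        refine ⟨n, g, ?_, hsum⟩
        intro j hj
        rcases h01 j hj with h' | h' | h' <;> simp [h']
  · intro S hS
    have hge2 : 2 ≤ S.card := by
      apply card_ge_two_of_gs_ne_zero _ hS
      apply gs_ne_zero_of_two_le_abs
      rw [Complex.norm_intCast]
      norm_num
    have hne2 : S.card ≠ 2 := card_ne_two_base2 hS
    omega

/-- The rational numbers in `𝓕₂` are exactly `−2, −1, 1`; in particular `2 ∈ 𝓕₃`. -/
theorem rational_memF_two_iff :
    (∀ α : ℚ, memF (α : ℂ) 2 ↔ (α = -2 ∨ α = -1 ∨ α = 1)) ∧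
    memF ((2 : ℚ) : ℂ) 3 := by
  have cast2 : ((2 : ℚ) : ℂ) = (((2 : ℤ) : ℤ) : ℂ) := by norm_num
  constructor
  · intro α
    constructor
    · rintro ⟨⟨S, hcard, hS⟩, -⟩
      by_cases habs : |α| < 1
      · exact absurd hS (no_repSet_of_abs_lt_one habs S)
      · have h1 : (1 : ℚ) ≤ |α| := not_lt.mp habs
        have hdpos : (0 : ℚ) < (α.den : ℚ) := by exact_mod_cast α.pos
        have hden : (α.den : ℤ) ≤ |α.num| := by
          rw [← Rat.num_div_den α, abs_div, abs_of_pos hdpos] at h1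
          have h2 : (α.den : ℚ) ≤ |(α.num : ℚ)| := by
            have := (le_div_iff₀ hdpos).mp h1
            linarith
          rw [show |(α.num : ℚ)| = ((|α.num| : ℤ) : ℚ) by push_cast; ring] at h2
          exact_mod_cast h2
        by_cases h3 : 3 ≤ α.num.natAbs
        · exact absurd hS (fun hS' => modp h3 hcard hS')
        · have hnA : α.num.natAbs ≤ 2 := by omega
          have hdenA : α.den ≤ α.num.natAbs := by
            have := Int.abs_eq_natAbs α.num
            omega
          have hcop := α.reduced
          have hdge : 1 ≤ α.den := α.pos
          have hden1 : α.den = 1 := by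
            rcases (by omega : α.den = 1 ∨ α.den = 2) with h' | h'
            · exact h'
            · exfalso
              have h2' : α.num.natAbs = 2 := by omega
              rw [h2', h'] at hcop
              norm_num [Nat.Coprime] at hcop
          have hαnum : α = (α.num : ℚ) := by
            conv_lhs => rw [← Rat.num_div_den α]
            rw [hden1]
            simp
          have h1A : 1 ≤ α.num.natAbs := by omega
          have : α.num = -2 ∨ α.num = -1 ∨ α.num = 1 ∨ α.num = 2 := by omega
          rcases this with h' | h' | h' | h'
          · left; rw [hαnum, h']; norm_num
          · right; left; rw [hαnum, h']; norm_num
          · right; right; rw [hαnum, h']; norm_num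
          · exfalso
            apply card_ne_two_base2 _ hcard
            rw [show (((2 : ℤ) : ℤ) : ℂ) = ((α : ℚ) : ℂ) by rw [hαnum, h']; norm_num]
            exact hS
    · intro hα
      rcases hα with rfl | rfl | rfl
      · rw [show (((-2 : ℚ)) : ℂ) = (((-2 : ℤ) : ℤ) : ℂ) by norm_num]
        exact memF_neg_two
      · rw [show (((-1 : ℚ)) : ℂ) = (((-1 : ℤ) : ℤ) : ℂ) by norm_num]
        exact memF_neg_one
      · rw [show (((1 : ℚ)) : ℂ) = (((1 : ℤ) : ℤ) : ℂ) by norm_num]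
        exact memF_one
  · rw [cast2]
    exact memF_two
end
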